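/- arXiv:2512.16787 — 13 statements merged into one kernel-verified Lean document; each statement's English description precedes it below -/
import Mathlib

section
/- Let F = diag(f₁,f₂,f₃) with 0 < f₁ < f₂ < f₃ and f₁+f₂+f₃ = 1, and let G = diag(g₁,g₂,g₃) with 0 < g₁ ≤ g₂ ≤ g₃ and g₁+g₂+g₃ = 1. If there exist R ∈ SO(3), a unit vector n ∈ ℝ³ and a real number λ ≠ 1 such that Rᵀ G R = λ F + (1−λ) n⊗n, then λ ∈ A(F,G). (First half of Lemma 2.5.) -/
open Matrix Set

noncomputable section

/-- `R` is a real 3×3 rotation matrix (element of SO(3)). -/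
def IsSO3 (R : Matrix (Fin 3) (Fin 3) ℝ) : Prop := Rᵀ * R = 1 ∧ R.det = 1

/-- The rank-one matrix `n ⊗ n = (nᵢ nⱼ)`. -/
def outer (n : Fin 3 → ℝ) : Matrix (Fin 3) (Fin 3) ℝ := Matrix.vecMulVec n n

/-- `n` is a unit vector of `ℝ³`. -/
def unitVec (n : Fin 3 → ℝ) : Prop := n 0 ^ 2 + n 1 ^ 2 + n 2 ^ 2 = 1

/-- `α₋(F,G) = max(g₁/f₂, g₂/f₃)`. -/
def alphaMinus (f1 f2 f3 g1 g2 g3 : ℝ) : ℝ := max (g1 / f2) (g2 / f3)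

/-- `α₊(F,G) = min(g₁/f₁, g₂/f₂, g₃/f₃)`. -/
def alphaPlus (f1 f2 f3 g1 g2 g3 : ℝ) : ℝ := min (g1 / f1) (min (g2 / f2) (g3 / f3))

/-- `β₋(F,G) = max(g₁/f₁, g₂/f₂, g₃/f₃)`. -/
def betaMinus (f1 f2 f3 g1 g2 g3 : ℝ) : ℝ := max (g1 / f1) (max (g2 / f2) (g3 / f3))

/-- `β₊(F,G) = min(g₂/f₁, g₃/f₂)`. -/
def betaPlus (f1 f2 f3 g1 g2 g3 : ℝ) : ℝ := min (g2 / f1) (g3 / f2)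

/-- `A(F,G) = ([α₋,α₊] ∪ [β₋,β₊]) \ {1}` in terms of the ordered eigenvalues. -/
def setA (f1 f2 f3 g1 g2 g3 : ℝ) : Set ℝ :=
  (Set.Icc (alphaMinus f1 f2 f3 g1 g2 g3) (alphaPlus f1 f2 f3 g1 g2 g3) ∪
    Set.Icc (betaMinus f1 f2 f3 g1 g2 g3) (betaPlus f1 f2 f3 g1 g2 g3)) \ {1}

/-- Second elementary symmetric invariant `i₂(M) = ((tr M)² − tr(M²))/2`. -/
def i2 (M : Matrix (Fin 3) (Fin 3) ℝ) : ℝ := (Matrix.trace M ^ 2 - Matrix.trace (M * M)) / 2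

/-- Third elementary symmetric invariant `i₃(M) = det M`. -/
def i3 (M : Matrix (Fin 3) (Fin 3) ℝ) : ℝ := M.det

/-- `η(λ,t) = λ/(λ + t(1−λ))`. -/
def etaFun (lam t : ℝ) : ℝ := lam / (lam + t * (1 - lam))

/-- The one-parameter family `M(t) = η(λ,t) F + (1 − η(λ,t)) n⊗n`. -/
def Mcurve (F : Matrix (Fin 3) (Fin 3) ℝ) (n : Fin 3 → ℝ) (lam t : ℝ) :
    Matrix (Fin 3) (Fin 3) ℝ :=
  etaFun lam t • F + (1 - etaFun lam t) • outer n

/-- The quadratic `b(x) = 6 s₂ x² + (s₁s₃ − 3s₂ − 4s₂²) x + 2 s₂²`. -/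
def bpoly (s1 s2 s3 x : ℝ) : ℝ :=
  6 * s2 * x ^ 2 + (s1 * s3 - 3 * s2 - 4 * s2 ^ 2) * x + 2 * s2 ^ 2

private lemma mnp' {a b : ℝ} (ha : 0 ≤ a) (hb : b ≤ 0) : a * b ≤ 0 := by nlinarith
private lemma mpn' {a b : ℝ} (ha : a ≤ 0) (hb : 0 ≤ b) : a * b ≤ 0 := by nlinarith
private lemma mnn' {a b : ℝ} (ha : a ≤ 0) (hb : b ≤ 0) : 0 ≤ a * b := by nlinarith

set_option maxHeartbeats 1000000 in
theorem statement0 (f1 f2 f3 g1 g2 g3 : ℝ)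
    (hf1 : 0 < f1) (hf12 : f1 < f2) (hf23 : f2 < f3) (hfsum : f1 + f2 + f3 = 1)
    (hg1 : 0 < g1) (hg12 : g1 ≤ g2) (hg23 : g2 ≤ g3) (hgsum : g1 + g2 + g3 = 1)
    (R : Matrix (Fin 3) (Fin 3) ℝ) (hR : IsSO3 R)
    (n : Fin 3 → ℝ) (hn : unitVec n) (lam : ℝ) (hlam : lam ≠ 1)
    (heq : Rᵀ * Matrix.diagonal ![g1, g2, g3] * R =
      lam • Matrix.diagonal ![f1, f2, f3] + (1 - lam) • outer n) :
    lam ∈ setA f1 f2 f3 g1 g2 g3 := by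
  obtain ⟨hRtR, hdetR⟩ := hR
  have hg2 : 0 < g2 := lt_of_lt_of_le hg1 hg12
  have hg3 : 0 < g3 := lt_of_lt_of_le hg2 hg23
  have hf2 : 0 < f2 := lt_trans hf1 hf12
  have hf3 : 0 < f3 := lt_trans hf2 hf23
  have key : ∀ x : ℝ, (g1 - x) * (g2 - x) * (g3 - x)
      = (lam*f1 - x)*(lam*f2 - x)*(lam*f3 - x)
        + (1-lam)*((n 0)^2*((lam*f2 - x)*(lam*f3 - x))
          + (n 1)^2*((lam*f1 - x)*(lam*f3 - x))
          + (n 2)^2*((lam*f1 - x)*(lam*f2 - x))) := by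
    intro x
    have h : Rᵀ * Matrix.diagonal ![g1,g2,g3] * R - x • (1 : Matrix (Fin 3) (Fin 3) ℝ)
        = Rᵀ * (Matrix.diagonal ![g1,g2,g3] - x • 1) * R := by
      rw [Matrix.mul_sub, Matrix.sub_mul, Matrix.mul_smul, Matrix.mul_one, Matrix.smul_mul, hRtR]
    have h1 : (Rᵀ * Matrix.diagonal ![g1,g2,g3] * R - x • (1 : Matrix (Fin 3) (Fin 3) ℝ)).det
        = (Matrix.diagonal ![g1,g2,g3] - x • (1 : Matrix (Fin 3) (Fin 3) ℝ)).det := by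
      rw [h, Matrix.det_mul, Matrix.det_mul, Matrix.det_transpose, hdetR]; ring
    rw [heq] at h1
    have hL : (Matrix.diagonal ![g1,g2,g3] - x • (1 : Matrix (Fin 3) (Fin 3) ℝ)).det
        = (g1 - x) * (g2 - x) * (g3 - x) := by
      simp [Matrix.det_fin_three, Matrix.sub_apply, Matrix.smul_apply, Matrix.one_apply,
        Matrix.diagonal_apply]
    have hM : (lam • Matrix.diagonal ![f1,f2,f3] + (1 - lam) • outer n
        - x • (1 : Matrix (Fin 3) (Fin 3) ℝ)).det
        = (lam*f1 - x)*(lam*f2 - x)*(lam*f3 - x)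
          + (1-lam)*((n 0)^2*((lam*f2 - x)*(lam*f3 - x))
            + (n 1)^2*((lam*f1 - x)*(lam*f3 - x))
            + (n 2)^2*((lam*f1 - x)*(lam*f2 - x))) := by
      simp [Matrix.det_fin_three, Matrix.sub_apply, Matrix.smul_apply, Matrix.one_apply,
        Matrix.add_apply, Matrix.diagonal_apply, outer, Matrix.vecMulVec_apply]
      ring
    rw [← hL, ← h1, hM]
  have E1 : (g1 - lam*f1)*(g2 - lam*f1)*(g3 - lam*f1)
      = (1-lam)*((n 0)^2*((lam*f2 - lam*f1)*(lam*f3 - lam*f1))) := by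
    linear_combination key (lam*f1)
  have E2 : (g1 - lam*f2)*(g2 - lam*f2)*(g3 - lam*f2)
      = (1-lam)*((n 1)^2*((lam*f1 - lam*f2)*(lam*f3 - lam*f2))) := by
    linear_combination key (lam*f2)
  have E3 : (g1 - lam*f3)*(g2 - lam*f3)*(g3 - lam*f3)
      = (1-lam)*((n 2)^2*((lam*f1 - lam*f3)*(lam*f2 - lam*f3))) := by
    linear_combination key (lam*f3)
  -- λ > 0
  have hlam0 : 0 < lam := by
    by_contra hcon
    push_neg at hcon
    have hl : 0 < (g1 - lam*f2)*(g2 - lam*f2)*(g3 - lam*f2) := by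
      have h1 : 0 < g1 - lam*f2 := by nlinarith
      have h2 : 0 < g2 - lam*f2 := by nlinarith
      have h3 : 0 < g3 - lam*f2 := by nlinarith
      exact mul_pos (mul_pos h1 h2) h3
    have hr : (1-lam)*((n 1)^2*((lam*f1 - lam*f2)*(lam*f3 - lam*f2))) ≤ 0 := by
      have ha : 0 ≤ lam*f1 - lam*f2 := by nlinarith
      have hb : lam*f3 - lam*f2 ≤ 0 := by nlinarith
      exact mnp' (by linarith) (mnp' (sq_nonneg _) (mnp' ha hb))
    linarith [E2]
  have hp12 : lam*f1 < lam*f2 := by nlinarith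
  have hp23 : lam*f2 < lam*f3 := by nlinarith
  rcases lt_or_gt_of_ne hlam with hlt | hgt
  · -- λ < 1 : interval [α₋, α₊]
    have c0 : (0:ℝ) ≤ 1 - lam := by linarith
    have hq1 : 0 ≤ (g1 - lam*f1)*(g2 - lam*f1)*(g3 - lam*f1) := by
      rw [E1]
      exact mul_nonneg c0 (mul_nonneg (sq_nonneg _)
        (mul_nonneg (by linarith) (by linarith)))
    have hq2 : (g1 - lam*f2)*(g2 - lam*f2)*(g3 - lam*f2) ≤ 0 := by
      rw [E2]
      exact mnp' c0 (mnp' (sq_nonneg _) (mpn' (by linarith) (by linarith)))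
    have hq3 : 0 ≤ (g1 - lam*f3)*(g2 - lam*f3)*(g3 - lam*f3) := by
      rw [E3]
      exact mul_nonneg c0 (mul_nonneg (sq_nonneg _) (mnn' (by linarith) (by linarith)))
    have a1 : g1 ≤ lam*f2 := by
      by_contra hcon; push_neg at hcon
      have := mul_pos (mul_pos (show (0:ℝ) < g1 - lam*f2 by linarith)
        (show (0:ℝ) < g2 - lam*f2 by linarith)) (show (0:ℝ) < g3 - lam*f2 by linarith)
      linarith
    have a2 : g2 ≤ lam*f3 := by
      by_contra hcon; push_neg at hcon
      have := mul_pos (mul_pos (show (0:ℝ) < -(g1 - lam*f3) by linarith)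
        (show (0:ℝ) < g2 - lam*f3 by linarith)) (show (0:ℝ) < g3 - lam*f3 by linarith)
      linarith
    have a3 : lam*f3 ≤ g3 := by
      by_contra hcon; push_neg at hcon
      have := mul_pos (mul_pos (show (0:ℝ) < -(g1 - lam*f3) by linarith)
        (show (0:ℝ) < -(g2 - lam*f3) by linarith)) (show (0:ℝ) < -(g3 - lam*f3) by linarith)
      linarith
    have a4 : lam*f2 ≤ g2 := by
      by_contra hcon; push_neg at hcon
      have := mul_pos (mul_pos (show (0:ℝ) < -(g1 - lam*f2) by linarith)
        (show (0:ℝ) < -(g2 - lam*f2) by linarith)) (show (0:ℝ) < g3 - lam*f2 by linarith)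
      linarith
    have a5 : lam*f1 ≤ g1 := by
      by_contra hcon; push_neg at hcon
      have := mul_pos (mul_pos (show (0:ℝ) < -(g1 - lam*f1) by linarith)
        (show (0:ℝ) < g2 - lam*f1 by linarith)) (show (0:ℝ) < g3 - lam*f1 by linarith)
      linarith
    refine ⟨Or.inl ⟨?_, ?_⟩, by simpa using hlam⟩
    · exact max_le ((div_le_iff₀ hf2).2 (by linarith)) ((div_le_iff₀ hf3).2 (by linarith))
    · exact le_min ((le_div_iff₀ hf1).2 a5) (le_min ((le_div_iff₀ hf2).2 a4)
        ((le_div_iff₀ hf3).2 a3))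
  · -- λ > 1 : interval [β₋, β₊]
    have c0 : 1 - lam ≤ 0 := by linarith
    have hq1 : (g1 - lam*f1)*(g2 - lam*f1)*(g3 - lam*f1) ≤ 0 := by
      rw [E1]
      exact mpn' c0 (mul_nonneg (sq_nonneg _) (mul_nonneg (by linarith) (by linarith)))
    have hq2 : 0 ≤ (g1 - lam*f2)*(g2 - lam*f2)*(g3 - lam*f2) := by
      rw [E2]
      exact mnn' c0 (mnp' (sq_nonneg _) (mpn' (by linarith) (by linarith)))
    have hq3 : (g1 - lam*f3)*(g2 - lam*f3)*(g3 - lam*f3) ≤ 0 := by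
      rw [E3]
      exact mpn' c0 (mul_nonneg (sq_nonneg _) (mnn' (by linarith) (by linarith)))
    have b1 : g1 ≤ lam*f1 := by
      by_contra hcon; push_neg at hcon
      have := mul_pos (mul_pos (show (0:ℝ) < g1 - lam*f1 by linarith)
        (show (0:ℝ) < g2 - lam*f1 by linarith)) (show (0:ℝ) < g3 - lam*f1 by linarith)
      linarith
    have b2 : g2 ≤ lam*f2 := by
      by_contra hcon; push_neg at hcon
      have := mul_pos (mul_pos (show (0:ℝ) < -(g1 - lam*f2) by linarith)
        (show (0:ℝ) < g2 - lam*f2 by linarith)) (show (0:ℝ) < g3 - lam*f2 by linarith)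
      linarith
    have b3 : g3 ≤ lam*f3 := by
      by_contra hcon; push_neg at hcon
      have := mul_pos (mul_pos (show (0:ℝ) < -(g1 - lam*f3) by linarith)
        (show (0:ℝ) < -(g2 - lam*f3) by linarith)) (show (0:ℝ) < g3 - lam*f3 by linarith)
      linarith
    have b4 : lam*f1 ≤ g2 := by
      by_contra hcon; push_neg at hcon
      have hg3p1 : g3 ≤ lam*f1 := by
        by_contra hcon2; push_neg at hcon2
        have := mul_pos (mul_pos (show (0:ℝ) < -(g1 - lam*f1) by linarith)
          (show (0:ℝ) < -(g2 - lam*f1) by linarith)) (show (0:ℝ) < g3 - lam*f1 by linarith)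
        linarith
      have := mul_pos (mul_pos (show (0:ℝ) < -(g1 - lam*f2) by linarith)
        (show (0:ℝ) < -(g2 - lam*f2) by linarith)) (show (0:ℝ) < -(g3 - lam*f2) by linarith)
      linarith
    have b5 : lam*f2 ≤ g3 := by
      by_contra hcon; push_neg at hcon
      have := mul_pos (mul_pos (show (0:ℝ) < -(g1 - lam*f2) by linarith)
        (show (0:ℝ) < -(g2 - lam*f2) by linarith)) (show (0:ℝ) < -(g3 - lam*f2) by linarith)
      linarith
    refine ⟨Or.inr ⟨?_, ?_⟩, by simpa using hlam⟩
    · exact max_le ((div_le_iff₀ hf1).2 (by linarith)) (max_le ((div_le_iff₀ hf2).2 (by linarith))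
        ((div_le_iff₀ hf3).2 (by linarith)))
    · exact le_min ((le_div_iff₀ hf1).2 b4) ((le_div_iff₀ hf2).2 b5)
end
end

section
/- Let F = diag(f₁,f₂,f₃) with 0 < f₁ < f₂ < f₃ and f₁+f₂+f₃ = 1, and let G = diag(g₁,g₂,g₃) with 0 < g₁ ≤ g₂ ≤ g₃ and g₁+g₂+g₃ = 1. If λ ∈ A(F,G), then the three quantities N₁ := (g₁−λf₁)(g₂−λf₁)(g₃−λf₁)/(λ²(1−λ)(f₂−f₁)(f₃−f₁)), N₂ := (g₁−λf₂)(g₂−λf₂)(g₃−λf₂)/(λ²(1−λ)(f₃−f₂)(f₁−f₂)), N₃ := (g₁−λf₃)(g₂−λf₃)(g₃−λf₃)/(λ²(1−λ)(f₁−f₃)(f₂−f₃)) are nonnegative, and there exist R ∈ SO(3) and a unit vector n ∈ ℝ³ with n₁² = N₁, n₂² = N₂, n₃² = N₃ such that Rᵀ G R = λ F + (1−λ) n⊗n. (Second half of Lemma 2.5.) -/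
open Matrix Set

noncomputable section

/- ===== auxiliary lemmas ===== -/

lemma two_of (a b x y : ℝ) (hs : a + b = x + y) (hp : a * b = x * y) :
    (a = x ∧ b = y) ∨ (a = y ∧ b = x) := by
  have h : (a - x) * (a - y) = 0 := by linear_combination a * hs - hp
  rcases mul_eq_zero.1 h with h | h
  · exact Or.inl ⟨by linarith, by linarith⟩
  · exact Or.inr ⟨by linarith, by linarith⟩

lemma perm3 (μ g : Fin 3 → ℝ)
    (e1 : μ 0 + μ 1 + μ 2 = g 0 + g 1 + g 2)
    (p2 : μ 0 ^ 2 + μ 1 ^ 2 + μ 2 ^ 2 = g 0 ^ 2 + g 1 ^ 2 + g 2 ^ 2)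
    (e3 : μ 0 * μ 1 * μ 2 = g 0 * g 1 * g 2) :
    ∃ σ : Equiv.Perm (Fin 3), ∀ i, μ i = g (σ i) := by
  have e2 : μ 0 * μ 1 + μ 0 * μ 2 + μ 1 * μ 2 = g 0 * g 1 + g 0 * g 2 + g 1 * g 2 := by
    linear_combination ((μ 0 + μ 1 + μ 2 + g 0 + g 1 + g 2) / 2) * e1 - (1/2) * p2
  have hroot : (μ 0 - g 0) * (μ 0 - g 1) * (μ 0 - g 2) = 0 := by
    linear_combination (μ 0 ^ 2) * e1 - (μ 0) * e2 + e3
  have mk : ∀ (v : Fin 3 → Fin 3) (w : Fin 3 → Fin 3), (∀ x, v (w x) = x) → (∀ x, w (v x) = x) →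
      (μ 0 = g (v 0) ∧ μ 1 = g (v 1) ∧ μ 2 = g (v 2)) →
      ∃ σ : Equiv.Perm (Fin 3), ∀ i, μ i = g (σ i) := by
    intro v w hvw hwv ⟨h0, h1, h2⟩
    exact ⟨⟨v, w, hwv, hvw⟩, fun i => by fin_cases i <;> assumption⟩
  rcases mul_eq_zero.1 hroot with h | h2
  · rcases mul_eq_zero.1 h with h0 | h1
    · have h0 : μ 0 = g 0 := by linarith [sub_eq_zero.1 h0]
      have hs : μ 1 + μ 2 = g 1 + g 2 := by linarith
      have hp : μ 1 * μ 2 = g 1 * g 2 := by linear_combination e2 - μ 0 * hs - (g 1 + g 2) * h0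
      rcases two_of _ _ _ _ hs hp with ⟨ha, hb⟩ | ⟨ha, hb⟩
      · exact mk ![0,1,2] ![0,1,2] (by decide) (by decide) ⟨h0, ha, hb⟩
      · exact mk ![0,2,1] ![0,2,1] (by decide) (by decide) ⟨h0, ha, hb⟩
    · have h0 : μ 0 = g 1 := by linarith [sub_eq_zero.1 h1]
      have hs : μ 1 + μ 2 = g 0 + g 2 := by linarith
      have hp : μ 1 * μ 2 = g 0 * g 2 := by linear_combination e2 - μ 0 * hs - (g 0 + g 2) * h0
      rcases two_of _ _ _ _ hs hp with ⟨ha, hb⟩ | ⟨ha, hb⟩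
      · exact mk ![1,0,2] ![1,0,2] (by decide) (by decide) ⟨h0, ha, hb⟩
      · exact mk ![1,2,0] ![2,0,1] (by decide) (by decide) ⟨h0, ha, hb⟩
  · have h0 : μ 0 = g 2 := by linarith [sub_eq_zero.1 h2]
    have hs : μ 1 + μ 2 = g 0 + g 1 := by linarith
    have hp : μ 1 * μ 2 = g 0 * g 1 := by linear_combination e2 - μ 0 * hs - (g 0 + g 1) * h0
    rcases two_of _ _ _ _ hs hp with ⟨ha, hb⟩ | ⟨ha, hb⟩
    · exact mk ![2,0,1] ![1,2,0] (by decide) (by decide) ⟨h0, ha, hb⟩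
    · exact mk ![2,1,0] ![2,1,0] (by decide) (by decide) ⟨h0, ha, hb⟩

lemma spectral3 (g : Fin 3 → ℝ) (M : Matrix (Fin 3) (Fin 3) ℝ) (hsym : Mᵀ = M)
    (h1 : M.trace = g 0 + g 1 + g 2)
    (h2 : (M * M).trace = g 0 ^ 2 + g 1 ^ 2 + g 2 ^ 2)
    (h3 : M.det = g 0 * g 1 * g 2) :
    ∃ R : Matrix (Fin 3) (Fin 3) ℝ, Rᵀ * R = 1 ∧ R.det = 1 ∧
      Rᵀ * Matrix.diagonal g * R = M := by
  have hA : M.IsHermitian := (Matrix.conjTranspose_eq_transpose_of_trivial M).trans hsym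
  set U : Matrix (Fin 3) (Fin 3) ℝ := (hA.eigenvectorUnitary : Matrix (Fin 3) (Fin 3) ℝ) with hUdef
  have hstar : star U = Uᵀ := by
    rw [Matrix.star_eq_conjTranspose, Matrix.conjTranspose_eq_transpose_of_trivial]
  have hU1 : Uᵀ * U = 1 := by
    rw [← hstar]; exact (Matrix.mem_unitaryGroup_iff').mp (hA.eigenvectorUnitary).2
  have hU2 : U * Uᵀ = 1 := by
    rw [← hstar]; exact (Matrix.mem_unitaryGroup_iff).mp (hA.eigenvectorUnitary).2
  set μ : Fin 3 → ℝ := hA.eigenvalues with hμ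
  have hofr : (RCLike.ofReal ∘ μ : Fin 3 → ℝ) = μ := by ext i; simp
  have hdiag : Uᵀ * M * U = Matrix.diagonal μ := by
    rw [← hstar, ← hofr]; exact (Unitary.conjStarAlgAut_star_apply _ _).symm.trans hA.conjStarAlgAut_star_eigenvectorUnitary
  have hMspec : M = U * Matrix.diagonal μ * Uᵀ := by
    have := hA.spectral_theorem
    rwa [Unitary.conjStarAlgAut_apply, hstar, hofr] at this
  have he1 : μ 0 + μ 1 + μ 2 = g 0 + g 1 + g 2 := by
    have ht : (Matrix.diagonal μ).trace = M.trace := by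
      rw [← hdiag, Matrix.trace_mul_cycle, hU2, Matrix.one_mul]
    rw [Matrix.trace_diagonal, Fin.sum_univ_three] at ht
    rw [ht, h1]
  have hp2 : μ 0 ^ 2 + μ 1 ^ 2 + μ 2 ^ 2 = g 0 ^ 2 + g 1 ^ 2 + g 2 ^ 2 := by
    have key : (Uᵀ * M * U) * (Uᵀ * M * U) = Uᵀ * (M * M) * U := by
      simp only [Matrix.mul_assoc]
      rw [← Matrix.mul_assoc U Uᵀ, hU2, Matrix.one_mul]
    rw [hdiag, Matrix.diagonal_mul_diagonal] at key
    have ht : (Matrix.diagonal fun i => μ i * μ i).trace = (M * M).trace := by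
      rw [key, Matrix.trace_mul_cycle, hU2, Matrix.one_mul]
    rw [Matrix.trace_diagonal, Fin.sum_univ_three] at ht
    rw [← h2, ← ht]; ring
  have he3 : μ 0 * μ 1 * μ 2 = g 0 * g 1 * g 2 := by
    have := hA.det_eq_prod_eigenvalues
    rw [Fin.prod_univ_three] at this
    simp only [RCLike.ofReal_real_eq_id, id] at this
    rw [← h3, this]
  obtain ⟨σ, hσ⟩ := perm3 μ g he1 hp2 he3
  set P : Matrix (Fin 3) (Fin 3) ℝ := (1 : Matrix (Fin 3) (Fin 3) ℝ).submatrix σ id with hPdef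
  have hPT : Pᵀ = (1 : Matrix (Fin 3) (Fin 3) ℝ).submatrix id σ := by
    rw [hPdef, Matrix.transpose_submatrix, Matrix.transpose_one]
  have hDsub : Matrix.diagonal μ = (Matrix.diagonal g).submatrix σ σ := by
    ext i j
    by_cases h : i = j
    · subst h; simp [Matrix.submatrix_apply, Matrix.diagonal_apply_eq, hσ]
    · rw [Matrix.submatrix_apply, Matrix.diagonal_apply_ne _ h,
        Matrix.diagonal_apply_ne _ (fun hc => h (σ.injective hc))]
  have hPDP : P * Matrix.diagonal g * Pᵀ = Matrix.diagonal μ := by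
    rw [hDsub, hPdef, hPT]
    have s1 : (1 : Matrix (Fin 3) (Fin 3) ℝ).submatrix (⇑σ) id * Matrix.diagonal g
        = (Matrix.diagonal g).submatrix (⇑σ) id := by
      have := Matrix.submatrix_mul_equiv (1 : Matrix (Fin 3) (Fin 3) ℝ) (Matrix.diagonal g)
        (⇑σ) (Equiv.refl (Fin 3)) id
      simpa using this
    rw [s1]
    have s2 := Matrix.submatrix_mul_equiv (Matrix.diagonal g) (1 : Matrix (Fin 3) (Fin 3) ℝ)
      (⇑σ) (Equiv.refl (Fin 3)) (⇑σ)
    simpa using s2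
  have hPP : P * Pᵀ = 1 := by
    rw [hPdef, hPT]
    have := Matrix.submatrix_mul_equiv (1 : Matrix (Fin 3) (Fin 3) ℝ)
      (1 : Matrix (Fin 3) (Fin 3) ℝ) (⇑σ) (Equiv.refl (Fin 3)) (⇑σ)
    simp only [Equiv.coe_refl, Matrix.submatrix_id_id, Matrix.mul_one] at this
    rw [this]
    ext i j
    simp [Matrix.submatrix_apply, Matrix.one_apply, σ.injective.eq_iff]
  set R₀ : Matrix (Fin 3) (Fin 3) ℝ := Pᵀ * Uᵀ with hR0def
  have hR0T : R₀ᵀ = U * P := by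
    rw [hR0def, Matrix.transpose_mul, Matrix.transpose_transpose, Matrix.transpose_transpose]
  have hR0o : R₀ᵀ * R₀ = 1 := by
    rw [hR0T, hR0def, Matrix.mul_assoc, ← Matrix.mul_assoc P Pᵀ, hPP, Matrix.one_mul, hU2]
  have hR0eq : R₀ᵀ * Matrix.diagonal g * R₀ = M := by
    rw [hR0T, hR0def, hMspec, ← hPDP]
    simp only [Matrix.mul_assoc]
  have hdet : R₀.det * R₀.det = 1 := by
    have := congrArg Matrix.det hR0o
    rwa [Matrix.det_mul, Matrix.det_transpose, Matrix.det_one] at this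
  rcases mul_self_eq_one_iff.1 hdet with hd1 | hdm1
  · exact ⟨R₀, hR0o, hd1, hR0eq⟩
  · set E : Matrix (Fin 3) (Fin 3) ℝ := Matrix.diagonal ![(-1 : ℝ), 1, 1] with hEdef
    have hET : Eᵀ = E := Matrix.diagonal_transpose _
    have hEE : E * E = 1 := by
      rw [hEdef, Matrix.diagonal_mul_diagonal]
      ext i j
      fin_cases i <;> fin_cases j <;> simp [Matrix.diagonal_apply, Matrix.one_apply]
    have hEgE : E * Matrix.diagonal g * E = Matrix.diagonal g := by
      rw [hEdef, Matrix.diagonal_mul_diagonal, Matrix.diagonal_mul_diagonal]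
      exact congrArg Matrix.diagonal (by funext i; fin_cases i <;> norm_num)
    have hdetE : E.det = -1 := by
      rw [hEdef, Matrix.det_diagonal, Fin.prod_univ_three]
      norm_num [Matrix.cons_val_two]
    refine ⟨E * R₀, ?_, ?_, ?_⟩
    · rw [Matrix.transpose_mul, hET, Matrix.mul_assoc, ← Matrix.mul_assoc E E, hEE,
        Matrix.one_mul, hR0o]
    · rw [Matrix.det_mul, hdetE, hdm1]; norm_num
    · rw [Matrix.transpose_mul, hET]
      calc R₀ᵀ * E * Matrix.diagonal g * (E * R₀)
          = R₀ᵀ * (E * Matrix.diagonal g * E) * R₀ := by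
            simp only [Matrix.mul_assoc]
        _ = M := by rw [hEgE, hR0eq]

set_option maxHeartbeats 1000000 in
lemma Nids (f1 f2 f3 g1 g2 g3 lam N1 N2 N3 : ℝ)
    (hfs : f1 + f2 + f3 = 1) (hgs : g1 + g2 + g3 = 1)
    (h0 : lam ≠ 0) (h1 : (1:ℝ) - lam ≠ 0)
    (d21 : f2 - f1 ≠ 0) (d31 : f3 - f1 ≠ 0) (d32 : f3 - f2 ≠ 0)
    (hN1 : N1 = (g1 - lam*f1)*(g2 - lam*f1)*(g3 - lam*f1)/(lam^2*(1-lam)*(f2-f1)*(f3-f1)))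
    (hN2 : N2 = (g1 - lam*f2)*(g2 - lam*f2)*(g3 - lam*f2)/(lam^2*(1-lam)*(f3-f2)*(f1-f2)))
    (hN3 : N3 = (g1 - lam*f3)*(g2 - lam*f3)*(g3 - lam*f3)/(lam^2*(1-lam)*(f1-f3)*(f2-f3))) :
    N1 + N2 + N3 = 1 ∧
    lam^2*(f1*f2+f1*f3+f2*f3) + (1-lam)*lam*(N1*(f2+f3)+N2*(f1+f3)+N3*(f1+f2))
      = g1*g2+g1*g3+g2*g3 ∧
    lam^3*(f1*f2*f3) + (1-lam)*lam^2*(N1*(f2*f3)+N2*(f1*f3)+N3*(f1*f2)) = g1*g2*g3 := by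
  obtain rfl : f3 = 1 - f1 - f2 := by linarith
  obtain rfl : g3 = 1 - g1 - g2 := by linarith
  subst hN1 hN2 hN3
  have d13 : f1 - (1 - f1 - f2) ≠ 0 := fun h => d31 (by linarith)
  have d23 : f2 - (1 - f1 - f2) ≠ 0 := fun h => d32 (by linarith)
  have d12 : f1 - f2 ≠ 0 := fun h => d21 (by linarith)
  refine ⟨?_, ?_, ?_⟩
  · field_simp
    ring
  · field_simp
    ring
  · field_simp
    ring

lemma sgnNNP (a b c : ℝ) (h1 : a ≤ 0) (h2 : b ≤ 0) (h3 : 0 ≤ c) : 0 ≤ a*b*c := by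
  have hab : 0 ≤ a*b := by nlinarith
  exact mul_nonneg hab h3

lemma sgnNPP (a b c : ℝ) (h1 : a ≤ 0) (h2 : 0 ≤ b) (h3 : 0 ≤ c) : a*b*c ≤ 0 := by
  have hab : a*b ≤ 0 := by nlinarith
  nlinarith

lemma sgnNNN (a b c : ℝ) (h1 : a ≤ 0) (h2 : b ≤ 0) (h3 : c ≤ 0) : a*b*c ≤ 0 := by
  have hab : 0 ≤ a*b := by nlinarith
  nlinarith

lemma rawSym (a b c x y z lam : ℝ) :
    (lam • Matrix.diagonal ![a,b,c] + (1-lam) • outer ![x,y,z])ᵀ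
      = lam • Matrix.diagonal ![a,b,c] + (1-lam) • outer ![x,y,z] := by
  ext i j
  fin_cases i <;> fin_cases j <;>
    simp [outer, Matrix.vecMulVec_apply, Matrix.diagonal_apply, mul_comm]

lemma rawTrace (a b c x y z lam : ℝ) :
    (lam • Matrix.diagonal ![a,b,c] + (1-lam) • outer ![x,y,z]).trace
      = lam*(a+b+c) + (1-lam)*(x^2+y^2+z^2) := by
  simp [outer, Matrix.trace_fin_three, Matrix.vecMulVec_apply, Matrix.diagonal_apply, Fin.sum_univ_three]
  ring

lemma rawTrace2 (a b c x y z lam : ℝ) :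
    ((lam • Matrix.diagonal ![a,b,c] + (1-lam) • outer ![x,y,z]) *
     (lam • Matrix.diagonal ![a,b,c] + (1-lam) • outer ![x,y,z])).trace
      = (lam*(a+b+c) + (1-lam)*(x^2+y^2+z^2))^2
        - 2*(lam^2*(a*b+a*c+b*c)
          + (1-lam)*lam*(x^2*(b+c) + y^2*(a+c) + z^2*(a+b))) := by
  simp [outer, Matrix.trace_fin_three, Matrix.mul_apply, Fin.sum_univ_three,
    Matrix.vecMulVec_apply, Matrix.diagonal_apply]
  ring

lemma rawDet (a b c x y z lam : ℝ) :
    (lam • Matrix.diagonal ![a,b,c] + (1-lam) • outer ![x,y,z]).det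
      = lam^3*(a*b*c) + (1-lam)*lam^2*(x^2*(b*c) + y^2*(a*c) + z^2*(a*b)) := by
  simp [outer, Matrix.det_fin_three, Matrix.vecMulVec_apply, Matrix.diagonal_apply]
  ring

set_option maxHeartbeats 1600000 in
theorem statement1 (f1 f2 f3 g1 g2 g3 : ℝ)
    (hf1 : 0 < f1) (hf12 : f1 < f2) (hf23 : f2 < f3) (hfsum : f1 + f2 + f3 = 1)
    (hg1 : 0 < g1) (hg12 : g1 ≤ g2) (hg23 : g2 ≤ g3) (hgsum : g1 + g2 + g3 = 1)
    (lam : ℝ) (hlam : lam ∈ setA f1 f2 f3 g1 g2 g3) :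
    0 ≤ (g1 - lam * f1) * (g2 - lam * f1) * (g3 - lam * f1) /
        (lam ^ 2 * (1 - lam) * (f2 - f1) * (f3 - f1)) ∧
    0 ≤ (g1 - lam * f2) * (g2 - lam * f2) * (g3 - lam * f2) /
        (lam ^ 2 * (1 - lam) * (f3 - f2) * (f1 - f2)) ∧
    0 ≤ (g1 - lam * f3) * (g2 - lam * f3) * (g3 - lam * f3) /
        (lam ^ 2 * (1 - lam) * (f1 - f3) * (f2 - f3)) ∧
    ∃ (R : Matrix (Fin 3) (Fin 3) ℝ) (n : Fin 3 → ℝ), IsSO3 R ∧ unitVec n ∧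
      n 0 ^ 2 = (g1 - lam * f1) * (g2 - lam * f1) * (g3 - lam * f1) /
        (lam ^ 2 * (1 - lam) * (f2 - f1) * (f3 - f1)) ∧
      n 1 ^ 2 = (g1 - lam * f2) * (g2 - lam * f2) * (g3 - lam * f2) /
        (lam ^ 2 * (1 - lam) * (f3 - f2) * (f1 - f2)) ∧
      n 2 ^ 2 = (g1 - lam * f3) * (g2 - lam * f3) * (g3 - lam * f3) /
        (lam ^ 2 * (1 - lam) * (f1 - f3) * (f2 - f3)) ∧
      Rᵀ * Matrix.diagonal ![g1, g2, g3] * R =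
        lam • Matrix.diagonal ![f1, f2, f3] + (1 - lam) • outer n := by
  obtain ⟨hmem, hne'⟩ := hlam
  have hne1 : lam ≠ 1 := by simpa using hne'
  have hf2 : (0:ℝ) < f2 := lt_trans hf1 hf12
  have hf3 : (0:ℝ) < f3 := lt_trans hf2 hf23
  have hg2 : (0:ℝ) < g2 := lt_of_lt_of_le hg1 hg12
  have hg3 : (0:ℝ) < g3 := lt_of_lt_of_le hg2 hg23
  set N1 := (g1 - lam * f1) * (g2 - lam * f1) * (g3 - lam * f1) /
        (lam ^ 2 * (1 - lam) * (f2 - f1) * (f3 - f1)) with hN1def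
  set N2 := (g1 - lam * f2) * (g2 - lam * f2) * (g3 - lam * f2) /
        (lam ^ 2 * (1 - lam) * (f3 - f2) * (f1 - f2)) with hN2def
  set N3 := (g1 - lam * f3) * (g2 - lam * f3) * (g3 - lam * f3) /
        (lam ^ 2 * (1 - lam) * (f1 - f3) * (f2 - f3)) with hN3def
  clear_value N1 N2 N3
  have hfl : lam * f1 + lam * f2 + lam * f3 = lam := by linear_combination lam * hfsum
  have key : 0 < lam ∧ 0 ≤ N1 ∧ 0 ≤ N2 ∧ 0 ≤ N3 := by
    rcases hmem with h | h
    · obtain ⟨ha, hb⟩ := h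
      simp only [alphaMinus, max_le_iff] at ha
      simp only [alphaPlus, le_min_iff] at hb
      have ha1 : g1 ≤ lam * f2 := (div_le_iff₀ hf2).mp ha.1
      have ha2 : g2 ≤ lam * f3 := (div_le_iff₀ hf3).mp ha.2
      have hb1 : lam * f1 ≤ g1 := (le_div_iff₀ hf1).mp hb.1
      have hb2 : lam * f2 ≤ g2 := (le_div_iff₀ hf2).mp hb.2.1
      have hb3 : lam * f3 ≤ g3 := (le_div_iff₀ hf3).mp hb.2.2
      have hl0 : 0 < lam := lt_of_lt_of_le (div_pos hg1 hf2) ha.1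
      have hl1 : lam < 1 := lt_of_le_of_ne (by linarith) hne1
      have h12 : lam * f1 ≤ lam * f2 := mul_le_mul_of_nonneg_left hf12.le hl0.le
      have h23 : lam * f2 ≤ lam * f3 := mul_le_mul_of_nonneg_left hf23.le hl0.le
      refine ⟨hl0, ?_, ?_, ?_⟩
      · rw [hN1def, div_nonneg_iff]; left
        refine ⟨mul_nonneg (mul_nonneg (by linarith) (by linarith)) (by linarith), ?_⟩
        exact (mul_pos (mul_pos (mul_pos (pow_pos hl0 2) (by linarith : (0:ℝ) < 1 - lam))
          (by linarith : (0:ℝ) < f2 - f1)) (by linarith : (0:ℝ) < f3 - f1)).le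
      · rw [hN2def, div_nonneg_iff]; right
        constructor
        · exact sgnNPP _ _ _ (by linarith) (by linarith) (by linarith)
        · have hpos : (0:ℝ) < lam ^ 2 * (1 - lam) * (f3 - f2) :=
            mul_pos (mul_pos (pow_pos hl0 2) (by linarith)) (by linarith)
          nlinarith [hpos]
      · rw [hN3def, div_nonneg_iff]; left
        constructor
        · exact sgnNNP _ _ _ (by linarith) (by linarith) (by linarith)
        · have hpos : (0:ℝ) < lam ^ 2 * (1 - lam) * (f3 - f1) * (f3 - f2) :=
            mul_pos (mul_pos (mul_pos (pow_pos hl0 2) (by linarith)) (by linarith)) (by linarith)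
          nlinarith [hpos]
    · obtain ⟨ha, hb⟩ := h
      simp only [betaMinus, max_le_iff] at ha
      simp only [betaPlus, le_min_iff] at hb
      have ha1 : g1 ≤ lam * f1 := (div_le_iff₀ hf1).mp ha.1
      have ha2 : g2 ≤ lam * f2 := (div_le_iff₀ hf2).mp ha.2.1
      have ha3 : g3 ≤ lam * f3 := (div_le_iff₀ hf3).mp ha.2.2
      have hb1 : lam * f1 ≤ g2 := (le_div_iff₀ hf1).mp hb.1
      have hb2 : lam * f2 ≤ g3 := (le_div_iff₀ hf2).mp hb.2
      have hl0 : 0 < lam := lt_of_lt_of_le (div_pos hg1 hf1) ha.1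
      have hl1 : 1 < lam := lt_of_le_of_ne (by linarith) (Ne.symm hne1)
      have h12 : lam * f1 ≤ lam * f2 := mul_le_mul_of_nonneg_left hf12.le hl0.le
      have h23 : lam * f2 ≤ lam * f3 := mul_le_mul_of_nonneg_left hf23.le hl0.le
      refine ⟨hl0, ?_, ?_, ?_⟩
      · rw [hN1def, div_nonneg_iff]; right
        constructor
        · exact sgnNPP _ _ _ (by linarith) (by linarith) (by linarith)
        · have hpos : (0:ℝ) < lam ^ 2 * (lam - 1) * (f2 - f1) * (f3 - f1) :=
            mul_pos (mul_pos (mul_pos (pow_pos hl0 2) (by linarith)) (by linarith)) (by linarith)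
          nlinarith [hpos]
      · rw [hN2def, div_nonneg_iff]; left
        constructor
        · exact sgnNNP _ _ _ (by linarith) (by linarith) (by linarith)
        · have hpos : (0:ℝ) < lam ^ 2 * (lam - 1) * (f3 - f2) * (f2 - f1) :=
            mul_pos (mul_pos (mul_pos (pow_pos hl0 2) (by linarith)) (by linarith)) (by linarith)
          nlinarith [hpos]
      · rw [hN3def, div_nonneg_iff]; right
        constructor
        · exact sgnNNN _ _ _ (by linarith) (by linarith) (by linarith)
        · have hpos : (0:ℝ) < lam ^ 2 * (lam - 1) * (f3 - f1) * (f3 - f2) :=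
            mul_pos (mul_pos (mul_pos (pow_pos hl0 2) (by linarith)) (by linarith)) (by linarith)
          nlinarith [hpos]
  obtain ⟨hl0, hN1n, hN2n, hN3n⟩ := key
  have hlne0 : lam ≠ 0 := ne_of_gt hl0
  have h1mne : (1:ℝ) - lam ≠ 0 := sub_ne_zero.mpr (Ne.symm hne1)
  obtain ⟨I1, I2, I3⟩ :=
    Nids f1 f2 f3 g1 g2 g3 lam N1 N2 N3 hfsum hgsum hlne0 h1mne
      (sub_ne_zero.mpr hf12.ne') (sub_ne_zero.mpr (lt_trans hf12 hf23).ne')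
      (sub_ne_zero.mpr hf23.ne')
      hN1def hN2def hN3def
  set x := Real.sqrt N1 with hxdef
  set y := Real.sqrt N2 with hydef
  set z := Real.sqrt N3 with hzdef
  have hx2 : x ^ 2 = N1 := Real.sq_sqrt hN1n
  have hy2 : y ^ 2 = N2 := Real.sq_sqrt hN2n
  have hz2 : z ^ 2 = N3 := Real.sq_sqrt hN3n
  set M : Matrix (Fin 3) (Fin 3) ℝ :=
    lam • Matrix.diagonal ![f1,f2,f3] + (1 - lam) • outer ![x,y,z] with hMdef
  have hsym : Mᵀ = M := rawSym f1 f2 f3 x y z lam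
  have hTr : M.trace = g1 + g2 + g3 := by
    rw [hMdef, rawTrace, hx2, hy2, hz2]
    linear_combination lam * hfsum + (1 - lam) * I1 - hgsum
  have hTr2 : (M * M).trace = g1 ^ 2 + g2 ^ 2 + g3 ^ 2 := by
    rw [hMdef, rawTrace2, hx2, hy2, hz2]
    have hS : lam*(f1+f2+f3) + (1-lam)*(N1+N2+N3) = g1 + g2 + g3 := by
      linear_combination lam * hfsum + (1 - lam) * I1 - hgsum
    linear_combination
      (lam*(f1+f2+f3) + (1-lam)*(N1+N2+N3) + g1 + g2 + g3) * hS - 2 * I2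
  have hDet : M.det = g1 * g2 * g3 := by
    rw [hMdef, rawDet, hx2, hy2, hz2]
    linear_combination I3
  have hg0 : (![g1,g2,g3] : Fin 3 → ℝ) 0 = g1 := rfl
  have hg1' : (![g1,g2,g3] : Fin 3 → ℝ) 1 = g2 := rfl
  have hg2' : (![g1,g2,g3] : Fin 3 → ℝ) 2 = g3 := rfl
  obtain ⟨R, hRo, hRdet, hReq⟩ :=
    spectral3 ![g1,g2,g3] M hsym
      (by rw [hg0, hg1', hg2']; exact hTr)
      (by rw [hg0, hg1', hg2']; exact hTr2)
      (by rw [hg0, hg1', hg2']; exact hDet)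
  refine ⟨hN1n, hN2n, hN3n, R, ![x,y,z], ⟨hRo, hRdet⟩, ?_, ?_, ?_, ?_, ?_⟩
  · show x ^ 2 + y ^ 2 + z ^ 2 = 1
    rw [hx2, hy2, hz2]; exact I1
  · exact hx2
  · exact hy2
  · exact hz2
  · exact hReq
end
end

section
/- Let F = diag(f₁,f₂,f₃) with 0 < f₁ < f₂ < f₃ and f₁+f₂+f₃ = 1. Then A(F,F) = [max(f₁/f₂, f₂/f₃), min(f₂/f₁, f₃/f₂)] \ {1}, this set is nonempty, and consequently there exist R ∈ SO(3), a unit vector n ∈ ℝ³ and a real number λ ≠ 1 such that Rᵀ F R = λ F + (1−λ) n⊗n. (Last assertion of Lemma 2.5.) -/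
open Matrix Set

noncomputable section

lemma key2 (p q m a b d : ℝ) (hpq : p < q) (hsum : a + d = p + q)
    (hdet : a * d - b ^ 2 = p * q) :
    ∃ Q : Matrix (Fin 3) (Fin 3) ℝ, IsSO3 Q ∧
      Qᵀ * Matrix.diagonal ![p, m, q] * Q = !![a, 0, b; 0, m, 0; b, 0, d] := by
  have hqp : (0:ℝ) < q - p := by linarith
  have hb2 : b ^ 2 = (a - p) * (q - a) := by linear_combination a * hsum - hdet
  have hap : p ≤ a := by nlinarith [sq_nonneg b]
  have haq : a ≤ q := by nlinarith [sq_nonneg b]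
  set c := Real.sqrt ((q - a) / (q - p)) with hc
  set s0 := Real.sqrt ((a - p) / (q - p)) with hs0def
  set s' := if 0 ≤ b then s0 else -s0 with hs'def
  have hc2 : c ^ 2 = (q - a) / (q - p) :=
    Real.sq_sqrt (div_nonneg (by linarith) hqp.le)
  have hs02 : s0 ^ 2 = (a - p) / (q - p) :=
    Real.sq_sqrt (div_nonneg (by linarith) hqp.le)
  have hs2 : s' ^ 2 = (a - p) / (q - p) := by
    rw [hs'def]; split
    · exact hs02
    · rw [neg_pow]; simp [hs02]
  have hunit : c ^ 2 + s' ^ 2 = 1 := by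
    rw [hc2, hs2, ← add_div, show q - a + (a - p) = q - p by ring]
    exact div_self hqp.ne'
  have habs : c * s0 = |b| / (q - p) := by
    have hsq : (c * s0) ^ 2 = (|b| / (q - p)) ^ 2 := by
      rw [mul_pow, hc2, hs02, div_pow, sq_abs, hb2, div_mul_div_comm,
        show (q - p) * (q - p) = (q - p) ^ 2 by ring,
        show (q - a) * (a - p) = (a - p) * (q - a) by ring]
    have h1 : 0 ≤ c * s0 := mul_nonneg (Real.sqrt_nonneg _) (Real.sqrt_nonneg _)
    have h2 : 0 ≤ |b| / (q - p) := div_nonneg (abs_nonneg b) hqp.le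
    calc c * s0 = Real.sqrt ((c * s0) ^ 2) := (Real.sqrt_sq h1).symm
      _ = Real.sqrt ((|b| / (q - p)) ^ 2) := by rw [hsq]
      _ = |b| / (q - p) := Real.sqrt_sq h2
  have hcs : (q - p) * (c * s') = b := by
    rw [hs'def]; split
    · rename_i h
      rw [habs, abs_of_nonneg h]; field_simp
    · rename_i h
      rw [mul_neg, habs, abs_of_neg (not_le.mp h)]; field_simp
  have hd0 : d = p + q - a := by linarith
  have ha' : p * c ^ 2 + q * s' ^ 2 = a := by
    rw [hc2, hs2]; field_simp; ring
  have hd' : p * s' ^ 2 + q * c ^ 2 = d := by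
    rw [hc2, hs2, hd0]; field_simp; ring
  have hdiag : (Matrix.diagonal ![p, m, q]) = !![p, 0, 0; 0, m, 0; 0, 0, q] := by
    ext i j
    fin_cases i <;> fin_cases j <;> (try rfl) <;>
      simp [Matrix.diagonal, Matrix.vecHead, Matrix.vecTail]
  have hT : (!![c, 0, -s'; 0, 1, 0; s', 0, c])ᵀ = !![c, 0, s'; 0, 1, 0; -s', 0, c] := by
    ext i j; fin_cases i <;> fin_cases j <;> rfl
  refine ⟨!![c, 0, -s'; 0, 1, 0; s', 0, c], ⟨?_, ?_⟩, ?_⟩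
  · rw [hT, Matrix.mul_fin_three, Matrix.one_fin_three]
    ext i j
    fin_cases i <;> fin_cases j
    all_goals (try simp [Matrix.vecHead, Matrix.vecTail])
    all_goals (try rfl)
    all_goals linarith [hunit]
  · rw [Matrix.det_fin_three]
    simp [Matrix.vecHead, Matrix.vecTail]
    linarith [hunit]
  · rw [hdiag, hT, Matrix.mul_fin_three, Matrix.mul_fin_three]
    ext i j
    fin_cases i <;> fin_cases j
    all_goals (try simp [Matrix.vecHead, Matrix.vecTail])
    all_goals (try rfl)
    all_goals linarith [hunit, ha', hcs, hd']

lemma build (f1 f2 f3 p q lam s : ℝ) (hpq : p < q)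
    (P : Matrix (Fin 3) (Fin 3) ℝ) (hP : IsSO3 P)
    (hPF : Pᵀ * Matrix.diagonal ![f1, f2, f3] * P = Matrix.diagonal ![p, lam * f2, q])
    (hs0 : 0 ≤ s) (hs1 : s ≤ 1)
    (hsum : lam * f1 + (1 - lam) * s + (lam * f3 + (1 - lam) * (1 - s)) = p + q)
    (hdet : (lam * f1 + (1 - lam) * s) * (lam * f3 + (1 - lam) * (1 - s))
        - (1 - lam) ^ 2 * (s * (1 - s)) = p * q) :
    ∃ (R : Matrix (Fin 3) (Fin 3) ℝ) (n : Fin 3 → ℝ),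
      IsSO3 R ∧ unitVec n ∧
      Rᵀ * Matrix.diagonal ![f1, f2, f3] * R =
        lam • Matrix.diagonal ![f1, f2, f3] + (1 - lam) • outer n := by
  have hs1' : (0:ℝ) ≤ 1 - s := by linarith
  have h1 : Real.sqrt s ^ 2 = s := Real.sq_sqrt hs0
  have h2 : Real.sqrt (1 - s) ^ 2 = 1 - s := Real.sq_sqrt hs1'
  set a := lam * f1 + (1 - lam) * s with hadef
  set d := lam * f3 + (1 - lam) * (1 - s) with hddef
  set b := (1 - lam) * (Real.sqrt s * Real.sqrt (1 - s)) with hbdef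
  have hb2 : b ^ 2 = (1 - lam) ^ 2 * (s * (1 - s)) := by
    calc b ^ 2 = (1 - lam) ^ 2 * (Real.sqrt s ^ 2 * Real.sqrt (1 - s) ^ 2) := by ring
      _ = _ := by rw [h1, h2]
  obtain ⟨Q, hQ, hQeq⟩ := key2 p q (lam * f2) a b d hpq (by linarith)
    (by rw [hb2]; exact hdet)
  refine ⟨P * Q, ![Real.sqrt s, 0, Real.sqrt (1 - s)], ⟨?_, ?_⟩, ?_, ?_⟩
  · rw [Matrix.transpose_mul, Matrix.mul_assoc, ← Matrix.mul_assoc Pᵀ P Q, hP.1,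
      Matrix.one_mul, hQ.1]
  · rw [Matrix.det_mul, hP.2, hQ.2, one_mul]
  · show Real.sqrt s ^ 2 + 0 ^ 2 + Real.sqrt (1 - s) ^ 2 = 1
    rw [h1, h2]; ring
  · have heq : (P * Q)ᵀ * Matrix.diagonal ![f1, f2, f3] * (P * Q) =
        !![a, 0, b; 0, lam * f2, 0; b, 0, d] := by
      simp only [Matrix.transpose_mul, Matrix.mul_assoc]
      rw [← Matrix.mul_assoc (Matrix.diagonal ![f1, f2, f3]) P Q,
        ← Matrix.mul_assoc Pᵀ (Matrix.diagonal ![f1, f2, f3] * P) Q,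
        ← Matrix.mul_assoc Pᵀ (Matrix.diagonal ![f1, f2, f3]) P, hPF,
        ← Matrix.mul_assoc Qᵀ (Matrix.diagonal ![p, lam * f2, q]) Q, hQeq]
    rw [heq]
    have hmul : Real.sqrt s * Real.sqrt (1 - s) = Real.sqrt (1 - s) * Real.sqrt s := by ring
    have hss : Real.sqrt s * Real.sqrt s = s := Real.mul_self_sqrt hs0
    have hss' : Real.sqrt (1 - s) * Real.sqrt (1 - s) = 1 - s := Real.mul_self_sqrt hs1'
    ext i j
    fin_cases i <;> fin_cases j
    all_goals (try simp [outer, Matrix.vecMulVec, Matrix.diagonal, Matrix.vecHead,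
      Matrix.vecTail, hadef, hddef, hbdef])
    all_goals (try rfl)
    all_goals (first
      | ring1
      | linear_combination (1 - lam) * hss - hadef
      | linear_combination (1 - lam) * hss' - hddef
      | linear_combination hbdef
      | linear_combination -hbdef
      | exact Or.inl trivial
      | exact Or.inl h1.symm
      | exact Or.inl h2.symm
      | tauto)

lemma diag_lit (x y z : ℝ) :
    Matrix.diagonal ![x, y, z] = !![x, 0, 0; 0, y, 0; 0, 0, z] := by
  ext i j
  fin_cases i <;> fin_cases j <;> (try rfl) <;>
    simp [Matrix.diagonal, Matrix.vecHead, Matrix.vecTail]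

set_option maxHeartbeats 2000000 in
lemma part3 (f1 f2 f3 : ℝ) (hf1 : 0 < f1) (hf12 : f1 < f2) (hf23 : f2 < f3)
    (hfsum : f1 + f2 + f3 = 1) :
    ∃ (R : Matrix (Fin 3) (Fin 3) ℝ) (n : Fin 3 → ℝ) (lam : ℝ),
      IsSO3 R ∧ unitVec n ∧ lam ≠ 1 ∧
      Rᵀ * Matrix.diagonal ![f1, f2, f3] * R =
        lam • Matrix.diagonal ![f1, f2, f3] + (1 - lam) • outer n := by
  have hf2 : 0 < f2 := hf1.trans hf12
  have hf3 : 0 < f3 := hf2.trans hf23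
  have hf13 : f1 < f3 := hf12.trans hf23
  have hf3eq : f3 = 1 - f1 - f2 := by linarith
  by_cases hcase : f2 ^ 2 ≤ f1 * f3
  · -- λ = f1/f2, middle eigenvalue f1, block eigenvalues (f2, f3)
    have hlamf2 : f1 / f2 * f2 = f1 := div_mul_cancel₀ f1 hf2.ne'
    have hP : IsSO3 (!![(0:ℝ), 1, 0; 1, 0, 0; 0, 0, -1]) := by
      constructor
      · rw [show (!![(0:ℝ), 1, 0; 1, 0, 0; 0, 0, -1])ᵀ =
            !![(0:ℝ), 1, 0; 1, 0, 0; 0, 0, -1] from by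
          ext i j; fin_cases i <;> fin_cases j <;> rfl]
        rw [Matrix.mul_fin_three, Matrix.one_fin_three]; norm_num
      · rw [Matrix.det_fin_three]; norm_num; simp [Matrix.cons_val_two, Matrix.vecHead, Matrix.vecTail]
    have hPF : (!![(0:ℝ), 1, 0; 1, 0, 0; 0, 0, -1])ᵀ * Matrix.diagonal ![f1, f2, f3] *
        !![(0:ℝ), 1, 0; 1, 0, 0; 0, 0, -1] = Matrix.diagonal ![f2, f1 / f2 * f2, f3] := by
      rw [hlamf2, diag_lit, diag_lit,
        show (!![(0:ℝ), 1, 0; 1, 0, 0; 0, 0, -1])ᵀ =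
            !![(0:ℝ), 1, 0; 1, 0, 0; 0, 0, -1] from by
          ext i j; fin_cases i <;> fin_cases j <;> rfl,
        Matrix.mul_fin_three, Matrix.mul_fin_three]
      norm_num
    have hden : (0:ℝ) < f1 * (f3 - f1) := by nlinarith
    have hnum0 : (0:ℝ) ≤ (f1 + f2) * (f2 * f3 - f1 ^ 2) := by nlinarith
    have hs0 : (0:ℝ) ≤ (f1 + f2) * (f2 * f3 - f1 ^ 2) / (f1 * (f3 - f1)) :=
      div_nonneg hnum0 hden.le
    have hs1 : (f1 + f2) * (f2 * f3 - f1 ^ 2) / (f1 * (f3 - f1)) ≤ 1 := by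
      rw [div_le_one hden]
      have k1 : (0:ℝ) ≤ f3 * (f1 * f3 - f2 ^ 2) :=
        mul_nonneg hf3.le (by linarith)
      have k3 : f1 * f3 * (f1 + f2 + f3) = f1 * f3 * 1 := by rw [hfsum]
      have k4 : f1 * f1 * (f1 + f2 + f3) = f1 * f1 * 1 := by rw [hfsum]
      nlinarith [k1, k3, k4]
    have h0 : f1 ≠ 0 := hf1.ne'
    have h0' : f2 ≠ 0 := hf2.ne'
    have h1 : (1:ℝ) - f1 - f2 - f1 ≠ 0 := by rw [hf3eq] at hf13; linarith
    have hsumA : f1 / f2 * f1 + (1 - f1 / f2) * ((f1 + f2) * (f2 * f3 - f1 ^ 2) / (f1 * (f3 - f1)))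
        + (f1 / f2 * f3 + (1 - f1 / f2) * (1 - (f1 + f2) * (f2 * f3 - f1 ^ 2) / (f1 * (f3 - f1))))
        = f2 + f3 := by
      rw [hf3eq]; field_simp; ring
    have hdetA : (f1 / f2 * f1 + (1 - f1 / f2) * ((f1 + f2) * (f2 * f3 - f1 ^ 2) / (f1 * (f3 - f1))))
        * (f1 / f2 * f3 + (1 - f1 / f2) * (1 - (f1 + f2) * (f2 * f3 - f1 ^ 2) / (f1 * (f3 - f1))))
        - (1 - f1 / f2) ^ 2 * ((f1 + f2) * (f2 * f3 - f1 ^ 2) / (f1 * (f3 - f1))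
          * (1 - (f1 + f2) * (f2 * f3 - f1 ^ 2) / (f1 * (f3 - f1)))) = f2 * f3 := by
      rw [hf3eq]; field_simp; ring
    obtain ⟨R, n, hR, hn, heq⟩ := build f1 f2 f3 f2 f3 (f1 / f2)
      ((f1 + f2) * (f2 * f3 - f1 ^ 2) / (f1 * (f3 - f1))) hf23 _ hP hPF hs0 hs1 hsumA hdetA
    exact ⟨R, n, f1 / f2, hR, hn, ne_of_lt ((div_lt_one hf2).2 hf12), heq⟩
  · -- λ = f3/f2, middle eigenvalue f3, block eigenvalues (f1, f2)
    push_neg at hcase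
    have hlamf2 : f3 / f2 * f2 = f3 := div_mul_cancel₀ f3 hf2.ne'
    have hP : IsSO3 (!![(1:ℝ), 0, 0; 0, 0, 1; 0, -1, 0]) := by
      constructor
      · rw [show (!![(1:ℝ), 0, 0; 0, 0, 1; 0, -1, 0])ᵀ =
            !![(1:ℝ), 0, 0; 0, 0, -1; 0, 1, 0] from by
          ext i j; fin_cases i <;> fin_cases j <;> rfl]
        rw [Matrix.mul_fin_three, Matrix.one_fin_three]; norm_num
      · rw [Matrix.det_fin_three]; norm_num; simp [Matrix.cons_val_two, Matrix.vecHead, Matrix.vecTail]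
    have hPF : (!![(1:ℝ), 0, 0; 0, 0, 1; 0, -1, 0])ᵀ * Matrix.diagonal ![f1, f2, f3] *
        !![(1:ℝ), 0, 0; 0, 0, 1; 0, -1, 0] = Matrix.diagonal ![f1, f3 / f2 * f2, f2] := by
      rw [hlamf2, diag_lit, diag_lit,
        show (!![(1:ℝ), 0, 0; 0, 0, 1; 0, -1, 0])ᵀ =
            !![(1:ℝ), 0, 0; 0, 0, -1; 0, 1, 0] from by
          ext i j; fin_cases i <;> fin_cases j <;> rfl,
        Matrix.mul_fin_three, Matrix.mul_fin_three]
      norm_num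
    have hden : (0:ℝ) < f3 * (f3 - f1) := by nlinarith
    have hnum0 : (0:ℝ) ≤ f1 * (f2 ^ 2 - f1 * f3) :=
      mul_nonneg hf1.le (by linarith)
    have hs0 : (0:ℝ) ≤ f1 * (f2 ^ 2 - f1 * f3) / (f3 * (f3 - f1)) :=
      div_nonneg hnum0 hden.le
    have hs1 : f1 * (f2 ^ 2 - f1 * f3) / (f3 * (f3 - f1)) ≤ 1 := by
      rw [div_le_one hden]
      have k1 : (0:ℝ) ≤ f1 * (f3 - f2) * (f2 + 2 * f3) := by
        apply mul_nonneg (mul_nonneg hf1.le (by linarith)); linarith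
      have k2 : (0:ℝ) ≤ f3 ^ 2 * (1 - 3 * f1) := by
        apply mul_nonneg (sq_nonneg f3); linarith
      have k3 : f1 * f3 * (f1 + f2 + f3) = f1 * f3 * 1 := by rw [hfsum]
      nlinarith [k1, k2, k3]
    have h0 : f1 ≠ 0 := hf1.ne'
    have h0' : f2 ≠ 0 := hf2.ne'
    have h1 : (1:ℝ) - f1 - f2 - f1 ≠ 0 := by rw [hf3eq] at hf13; linarith
    have h2 : (1:ℝ) - f1 - f2 ≠ 0 := by rw [hf3eq] at hf3; linarith
    have hsumB : f3 / f2 * f1 + (1 - f3 / f2) * (f1 * (f2 ^ 2 - f1 * f3) / (f3 * (f3 - f1)))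
        + (f3 / f2 * f3 + (1 - f3 / f2) * (1 - f1 * (f2 ^ 2 - f1 * f3) / (f3 * (f3 - f1))))
        = f1 + f2 := by
      rw [hf3eq]; field_simp; ring
    have hdetB : (f3 / f2 * f1 + (1 - f3 / f2) * (f1 * (f2 ^ 2 - f1 * f3) / (f3 * (f3 - f1))))
        * (f3 / f2 * f3 + (1 - f3 / f2) * (1 - f1 * (f2 ^ 2 - f1 * f3) / (f3 * (f3 - f1))))
        - (1 - f3 / f2) ^ 2 * (f1 * (f2 ^ 2 - f1 * f3) / (f3 * (f3 - f1))
          * (1 - f1 * (f2 ^ 2 - f1 * f3) / (f3 * (f3 - f1)))) = f1 * f2 := by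
      rw [hf3eq]; field_simp; ring
    obtain ⟨R, n, hR, hn, heq⟩ := build f1 f2 f3 f1 f2 (f3 / f2)
      (f1 * (f2 ^ 2 - f1 * f3) / (f3 * (f3 - f1))) hf12 _ hP hPF hs0 hs1 hsumB hdetB
    exact ⟨R, n, f3 / f2, hR, hn, ((one_lt_div hf2).2 hf23).ne', heq⟩


theorem statement2 (f1 f2 f3 : ℝ)
    (hf1 : 0 < f1) (hf12 : f1 < f2) (hf23 : f2 < f3) (hfsum : f1 + f2 + f3 = 1) :
    setA f1 f2 f3 f1 f2 f3 =
      Set.Icc (max (f1 / f2) (f2 / f3)) (min (f2 / f1) (f3 / f2)) \ {1} ∧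
    (setA f1 f2 f3 f1 f2 f3).Nonempty ∧
    ∃ (R : Matrix (Fin 3) (Fin 3) ℝ) (n : Fin 3 → ℝ) (lam : ℝ),
      IsSO3 R ∧ unitVec n ∧ lam ≠ 1 ∧
      Rᵀ * Matrix.diagonal ![f1, f2, f3] * R =
        lam • Matrix.diagonal ![f1, f2, f3] + (1 - lam) • outer n := by
  have hf2 : 0 < f2 := hf1.trans hf12
  have hf3 : 0 < f3 := hf2.trans hf23
  have hle1 : max (f1 / f2) (f2 / f3) ≤ 1 :=
    max_le (le_of_lt ((div_lt_one hf2).2 hf12)) (le_of_lt ((div_lt_one hf3).2 hf23))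
  have hge1 : 1 ≤ min (f2 / f1) (f3 / f2) :=
    le_min ((one_le_div hf1).2 hf12.le) ((one_le_div hf2).2 hf23.le)
  have hsetA : setA f1 f2 f3 f1 f2 f3 =
      Set.Icc (max (f1 / f2) (f2 / f3)) (min (f2 / f1) (f3 / f2)) \ {1} := by
    unfold setA alphaMinus alphaPlus betaMinus betaPlus
    rw [div_self hf1.ne', div_self hf2.ne', div_self hf3.ne', min_self, max_self,
      min_self, max_self, Set.Icc_union_Icc_eq_Icc hle1 hge1]
  refine ⟨hsetA, ?_, part3 f1 f2 f3 hf1 hf12 hf23 hfsum⟩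
  rw [hsetA]
  have hgt : 1 < min (f2 / f1) (f3 / f2) :=
    lt_min ((one_lt_div hf1).2 hf12) ((one_lt_div hf2).2 hf23)
  exact ⟨min (f2 / f1) (f3 / f2),
    ⟨le_trans hle1 hgt.le, le_refl _⟩, fun h => hgt.ne' (Set.mem_singleton_iff.1 h)⟩
end
end

section
/- Let s₁, s₂, s₃ be real numbers with 0 < s₁ < s₂ < s₃ and s₁+s₂+s₃ = 1, and let b(x) := 6 s₂ x² + (s₁ s₃ − 3 s₂ − 4 s₂²) x + 2 s₂². Then b has two distinct real roots u_α < u_β, and they satisfy s₁ ≤ u_α < 1/3 < u_β ≤ s₃. (Proposition 3.2(i).) -/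
open Matrix Set

noncomputable section

set_option maxHeartbeats 2000000 in
theorem statement3 (s1 s2 s3 : ℝ)
    (hs1 : 0 < s1) (hs12 : s1 < s2) (hs23 : s2 < s3) (hsum : s1 + s2 + s3 = 1) :
    ∃ ua ub : ℝ, ua < ub ∧
      bpoly s1 s2 s3 ua = 0 ∧ bpoly s1 s2 s3 ub = 0 ∧
      (∀ x : ℝ, bpoly s1 s2 s3 x = 0 → x = ua ∨ x = ub) ∧
      s1 ≤ ua ∧ ua < 1 / 3 ∧ 1 / 3 < ub ∧ ub ≤ s3 := by
  have hs2 : 0 < s2 := hs1.trans hs12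
  set B := s1 * s3 - 3 * s2 - 4 * s2 ^ 2 with hB
  have hq : B + 2 * s2 + 6 * s2 ^ 2 < 0 := by
    nlinarith [mul_pos (sub_pos.2 hs12) (sub_pos.2 hs23)]
  have hbs1 : 0 ≤ 6 * s2 * s1 ^ 2 + B * s1 + 2 * s2 ^ 2 := by
    nlinarith [mul_pos hs1 (sub_pos.2 hs12), sq_nonneg (s1 - s2), sq_nonneg (3*s2 - 1),
      mul_pos (sub_pos.2 hs12) (sub_pos.2 hs23), sq_nonneg (s1 + 2*s2 - 1),
      mul_nonneg (sub_pos.2 hs12).le (sub_pos.2 hs23).le, sq_nonneg (3*s1 - 1)]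
  have hbs3 : 0 ≤ 6 * s2 * s3 ^ 2 + B * s3 + 2 * s2 ^ 2 := by
    nlinarith [mul_pos hs1 (sub_pos.2 hs12), sq_nonneg (s3 - s2), sq_nonneg (3*s2 - 1),
      mul_pos (sub_pos.2 hs12) (sub_pos.2 hs23), sq_nonneg (s3 + 2*s2 - 1),
      mul_nonneg (sub_pos.2 hs12).le (sub_pos.2 hs23).le, sq_nonneg (3*s3 - 1)]
  have hL : 0 ≤ -B - 12 * s2 * s1 := by
    nlinarith [mul_pos hs1 (sub_pos.2 hs12), mul_pos hs2 (sub_pos.2 hs12)]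
  have hR : 0 ≤ 12 * s2 * s3 + B := by
    nlinarith [mul_pos hs2 (sub_pos.2 hs23), mul_pos hs1 (hs2.trans hs23)]
  have hD : 0 < B ^ 2 - 48 * s2 ^ 3 := by
    nlinarith [sq_nonneg (B + 4 * s2), mul_pos hs2 (show (0:ℝ) < -(B + 2*s2 + 6*s2^2) by linarith)]
  set sd := Real.sqrt (B ^ 2 - 48 * s2 ^ 3) with hsd
  have hsd2 : sd ^ 2 = B ^ 2 - 48 * s2 ^ 3 := Real.sq_sqrt hD.le
  have hsdpos : 0 < sd := Real.sqrt_pos.2 hD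
  have h12 : (0:ℝ) < 12 * s2 := by linarith
  have h12ne : (12 * s2 : ℝ) ≠ 0 := ne_of_gt h12
  set ua := (-B - sd) / (12 * s2) with hua
  set ub := (-B + sd) / (12 * s2) with hub
  have hsum2 : 6 * s2 * (ua + ub) = -B := by
    rw [hua, hub]; field_simp; ring
  have hprod : 6 * s2 * (ua * ub) = 2 * s2 ^ 2 := by
    rw [hua, hub]; field_simp; nlinarith [hsd2]
  have key : ∀ x : ℝ, bpoly s1 s2 s3 x = 6 * s2 * (x - ua) * (x - ub) := by
    intro x
    show 6 * s2 * x ^ 2 + B * x + 2 * s2 ^ 2 = _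
    linear_combination x * hsum2 - hprod
  refine ⟨ua, ub, ?_, ?_, ?_, ?_, ?_, ?_, ?_, ?_⟩
  · rw [hua, hub, div_lt_div_iff₀ h12 h12]; nlinarith [hsdpos]
  · rw [key]; ring
  · rw [key]; ring
  · intro x hx
    rw [key] at hx
    rcases mul_eq_zero.1 hx with h | h
    · rcases mul_eq_zero.1 h with h' | h'
      · exact absurd h' (by positivity)
      · exact Or.inl (by linarith [sub_eq_zero.1 h'])
    · exact Or.inr (by linarith [sub_eq_zero.1 h])
  · rw [hua, le_div_iff₀ h12]
    have : sd ≤ -B - 12 * s2 * s1 := by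
      nlinarith [hsd2, hsdpos, mul_nonneg (le_of_lt hs2) hbs1, hbs1, hL,
        mul_nonneg hs2.le hbs1]
    linarith
  · rw [hua, div_lt_iff₀ h12]
    have : -B - 4 * s2 < sd := by
      nlinarith [hsd2, hsdpos, mul_pos hs2 (show (0:ℝ) < -(B + 2*s2 + 6*s2^2) by linarith),
        sq_nonneg (sd + B + 4 * s2)]
    linarith
  · rw [hub, lt_div_iff₀ h12]
    have : B + 4 * s2 < sd := by
      nlinarith [hsd2, hsdpos, mul_pos hs2 (show (0:ℝ) < -(B + 2*s2 + 6*s2^2) by linarith),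
        sq_nonneg (sd - (B + 4 * s2))]
    linarith
  · rw [hub, div_le_iff₀ h12]
    have : sd ≤ 12 * s2 * s3 + B := by
      nlinarith [hsd2, hsdpos, mul_nonneg hs2.le hbs3, hR]
    linarith
end
end

section
/- With u_α the smallest and u_β the largest root of b, one has max(u_α/s₂, u_α/s₃) = min(u_α/s₁, u_α/s₂, (1−2u_α)/s₃) = u_α/s₂, i.e. α₋(S,U_α) = α₊(S,U_α) = u_α/s₂, and max((1−2u_β)/s₁, u_β/s₂, u_β/s₃) = min(u_β/s₁, u_β/s₂) = u_β/s₂, i.e. β₋(S,U_β) = β₊(S,U_β) = u_β/s₂, where the ordered eigenvalues of U_α are (u_α, u_α, 1−2u_α) and of U_β are (1−2u_β, u_β, u_β). (Proposition 3.2(ii).) -/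
open Matrix Set

noncomputable section

set_option maxHeartbeats 1000000 in
theorem statement4 (s1 s2 s3 ua ub : ℝ)
    (hs1 : 0 < s1) (hs12 : s1 < s2) (hs23 : s2 < s3) (hsum : s1 + s2 + s3 = 1)
    (hua : bpoly s1 s2 s3 ua = 0) (hub : bpoly s1 s2 s3 ub = 0)
    (huamin : ∀ x : ℝ, bpoly s1 s2 s3 x = 0 → ua ≤ x)
    (hubmax : ∀ x : ℝ, bpoly s1 s2 s3 x = 0 → x ≤ ub)
    (hua1 : s1 ≤ ua) (hua2 : ua < 1 / 3) (hub1 : 1 / 3 < ub) (hub2 : ub ≤ s3) :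
    alphaMinus s1 s2 s3 ua ua (1 - 2 * ua) = ua / s2 ∧
    alphaPlus s1 s2 s3 ua ua (1 - 2 * ua) = ua / s2 ∧
    betaMinus s1 s2 s3 (1 - 2 * ub) ub ub = ub / s2 ∧
    betaPlus s1 s2 s3 (1 - 2 * ub) ub ub = ub / s2 := by
  have hs2 : 0 < s2 := hs1.trans hs12
  have hs3 : 0 < s3 := hs2.trans hs23
  have hua0 : 0 < ua := lt_of_lt_of_le hs1 hua1
  have hub0 : 0 < ub := by linarith
  have hord : ua < ub := by linarith
  have hne : ua - ub ≠ 0 := by intro h; linarith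
  unfold bpoly at hua hub
  have hsumr : 6*s2*(ua+ub) + (s1*s3 - 3*s2 - 4*s2^2) = 0 := by
    have h : (ua-ub) * (6*s2*(ua+ub) + (s1*s3 - 3*s2 - 4*s2^2)) = 0 := by
      linear_combination hua - hub
    rcases mul_eq_zero.1 h with h' | h'
    · exact absurd h' hne
    · exact h'
  have hprod : 6*s2*(ua*ub) = 2*s2^2 := by linear_combination ua * hsumr - hua
  have e1 : 6*s2*((s2 - ua*(s3+2*s2)) * (s2 - ub*(s3+2*s2))) = s2*s3*(s3-s2)*(s1-s2) := by
    linear_combination (s3+2*s2)^2 * hprod - s2*(s3+2*s2) * hsumr + 3*s2^2*s3 * hsum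
  have e2 : 6*s2*((s2 - ua*(s1+2*s2)) * (s2 - ub*(s1+2*s2))) = s1*s2*(s3-s2)*(s1-s2) := by
    linear_combination (s1+2*s2)^2 * hprod - s2*(s1+2*s2) * hsumr + 3*s2^2*s1 * hsum
  have hN1 : s2*s3*(s3-s2)*(s1-s2) < 0 :=
    mul_neg_of_pos_of_neg (mul_pos (mul_pos hs2 hs3) (by linarith)) (by linarith)
  have hN2 : s1*s2*(s3-s2)*(s1-s2) < 0 :=
    mul_neg_of_pos_of_neg (mul_pos (mul_pos hs1 hs2) (by linarith)) (by linarith)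
  have h6 : (0:ℝ) ≤ 6*s2 := by linarith
  have k1 : (s2 - ua*(s3+2*s2)) * (s2 - ub*(s3+2*s2)) < 0 := by
    by_contra h
    push_neg at h
    have hm := mul_nonneg h6 h
    linarith only [hm, e1, hN1]
  have k2 : (s2 - ua*(s1+2*s2)) * (s2 - ub*(s1+2*s2)) < 0 := by
    by_contra h
    push_neg at h
    have hm := mul_nonneg h6 h
    linarith only [hm, e2, hN2]
  have hA : 0 < s3 + 2*s2 := by linarith
  have hB : 0 < s1 + 2*s2 := by linarith
  have h1 : ua * (s3 + 2*s2) < s2 := by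
    by_contra h
    push_neg at h
    have hm := mul_lt_mul_of_pos_right hord hA
    have h' : 0 ≤ (ua*(s3+2*s2) - s2) * (ub*(s3+2*s2) - s2) :=
      mul_nonneg (by linarith) (by linarith)
    linarith only [k1, h']
  have h2 : s2 < ub * (s1 + 2*s2) := by
    by_contra h
    push_neg at h
    have hm := mul_lt_mul_of_pos_right hord hB
    have h' : 0 ≤ (s2 - ua*(s1+2*s2)) * (s2 - ub*(s1+2*s2)) :=
      mul_nonneg (by linarith) (by linarith)
    linarith only [k2, h']
  have i1 : ua/s3 ≤ ua/s2 := by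
    rw [div_le_div_iff₀ hs3 hs2]
    exact mul_le_mul_of_nonneg_left hs23.le hua0.le
  have i2' : ua/s2 ≤ ua/s1 := by
    rw [div_le_div_iff₀ hs2 hs1]
    exact mul_le_mul_of_nonneg_left hs12.le hua0.le
  have i3' : ua/s2 ≤ (1-2*ua)/s3 := by
    rw [div_le_div_iff₀ hs2 hs3]
    linarith only [h1]
  have j1 : ub/s3 ≤ ub/s2 := by
    rw [div_le_div_iff₀ hs3 hs2]
    exact mul_le_mul_of_nonneg_left hs23.le hub0.le
  have j2 : (1-2*ub)/s1 ≤ ub/s2 := by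
    rw [div_le_div_iff₀ hs1 hs2]
    linarith only [h2]
  have j3 : ub/s2 ≤ ub/s1 := by
    rw [div_le_div_iff₀ hs2 hs1]
    exact mul_le_mul_of_nonneg_left hs12.le hub0.le
  refine ⟨?_, ?_, ?_, ?_⟩
  · rw [alphaMinus, max_eq_left i1]
  · rw [alphaPlus, min_eq_left i3', min_eq_right i2']
  · rw [betaMinus, max_eq_left j1, max_eq_right j2]
  · rw [betaPlus, min_eq_right j3]
end
end

section
/- With α := u_α/s₂ and β := u_β/s₂, there exist R ∈ SO(3) and a unit vector n = (n₁, 0, n₃) ∈ ℝ³ (second component zero) such that Rᵀ U_α R = α S + (1−α) n⊗n; likewise there exist R' ∈ SO(3) and a unit vector m = (m₁, 0, m₃) ∈ ℝ³ such that R'ᵀ U_β R' = β S + (1−β) m⊗m. (Proposition 3.2(iii), existence form.) -/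
open Matrix Set

noncomputable section

set_option maxHeartbeats 1000000

lemma sign_split {P Q : ℝ} (h : P * Q < 0) (h2 : Q < P) : Q < 0 ∧ 0 < P := by
  constructor
  · by_contra hq; push_neg at hq; nlinarith
  · by_contra hp; push_neg at hp; nlinarith

lemma core_aux (s1 s2 s3 u p q t : ℝ) (hs2 : s2 ≠ 0) (hpq : p < q)
    (ht0 : 0 ≤ t) (ht1 : t ≤ 1)
    (htr : (u/s2)*s1 + (u/s2)*s3 + (1 - u/s2) = p + q)
    (hdet : ((u/s2)*s1)*((u/s2)*s3) + (u/s2)*(1 - u/s2)*(s3*(1-t)+s1*t) = p*q) :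
    ∃ (R : Matrix (Fin 3) (Fin 3) ℝ) (n : Fin 3 → ℝ),
      IsSO3 R ∧ unitVec n ∧ n 1 = 0 ∧
      Rᵀ * Matrix.diagonal ![p, u, q] * R =
        (u / s2) • Matrix.diagonal ![s1, s2, s3] + (1 - u / s2) • outer n := by
  set α := u / s2 with hα
  set e := 1 - α with he
  have hus2 : α * s2 = u := by rw [hα]; field_simp
  clear_value α
  clear hα
  set A := α * s1 + e * (1 - t) with hA
  clear_value A
  have key1 : (A - p) * (q - A) = e^2 * ((1-t)*t) := by
    rw [hA, he]
    linear_combination hdet - (α*s1 + (1-α)*(1-t))*htr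
  have he2 : 0 ≤ (A - p) * (q - A) := by
    rw [key1]
    exact mul_nonneg (sq_nonneg e) (mul_nonneg (by linarith) ht0)
  have hpA : p ≤ A := by nlinarith [he2, hpq, sq_nonneg (p - A)]
  have hAq : A ≤ q := by nlinarith [he2, hpq, sq_nonneg (q - A)]
  have hD : (0:ℝ) < q - p := by linarith
  set S2 := (A - p) / (q - p) with hS2def
  have hS0 : 0 ≤ S2 := div_nonneg (by linarith) hD.le
  have hS1 : S2 ≤ 1 := (div_le_one hD).2 (by linarith)
  have hDS : (q - p) * S2 = A - p := by rw [hS2def]; field_simp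
  clear_value S2
  clear hS2def
  set c := Real.sqrt (1 - S2) with hcdef
  set s := Real.sqrt S2 with hsdef
  have hc2 : c * c = 1 - S2 := Real.mul_self_sqrt (by linarith)
  have hs2' : s * s = S2 := Real.mul_self_sqrt hS0
  have hcpos : 0 ≤ c := Real.sqrt_nonneg _
  have hspos : 0 ≤ s := Real.sqrt_nonneg _
  have hcs : c * s = Real.sqrt ((1 - S2) * S2) := by
    rw [hcdef, hsdef, ← Real.sqrt_mul (by linarith)]
  clear_value c s
  clear hcdef hsdef
  set ε : ℝ := if 0 ≤ e then 1 else -1 with hεdef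
  set n1 := ε * Real.sqrt (1 - t) with hn1def
  set n3 := Real.sqrt t with hn3def
  have hn1sq : n1 * n1 = 1 - t := by
    rw [hn1def]
    rcases le_or_gt 0 e with h | h
    · simp only [hεdef, if_pos h, one_mul]
      exact Real.mul_self_sqrt (by linarith)
    · simp only [hεdef, if_neg (not_le.2 h), neg_one_mul, neg_mul_neg]
      exact Real.mul_self_sqrt (by linarith)
  have hn3sq : n3 * n3 = t := Real.mul_self_sqrt ht0
  have hen13 : e * (n1 * n3) = Real.sqrt (e^2 * ((1 - t) * t)) := by
    rw [hn1def, hn3def, Real.sqrt_mul (sq_nonneg e), Real.sqrt_sq_eq_abs,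
      Real.sqrt_mul (by linarith)]
    rcases le_or_gt 0 e with h | h
    · simp only [hεdef, if_pos h, abs_of_nonneg h]; ring
    · simp only [hεdef, if_neg (not_le.2 h), abs_of_neg h]; ring
  clear_value n1 n3
  clear hn1def hn3def hεdef
  have cross : (q - p) * (c * s) = e * (n1 * n3) := by
    rw [hcs, hen13, show (q-p) * Real.sqrt ((1-S2)*S2)
        = Real.sqrt ((q-p)^2 * ((1-S2)*S2)) by
      rw [Real.sqrt_mul (sq_nonneg _), Real.sqrt_sq hD.le]]
    congr 1
    have h3 : (q - p) * (1 - S2) = q - A := by linear_combination -hDS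
    nlinarith [h3, hDS, key1]
  have hT : (!![c, 0, -s; 0, 1, 0; s, 0, c])ᵀ = !![c, 0, s; 0, 1, 0; -s, 0, c] := by
    ext i j; fin_cases i <;> fin_cases j <;> rfl
  have hDg : Matrix.diagonal ![p, u, q] = !![p, 0, 0; 0, u, 0; 0, 0, q] := by
    ext i j; fin_cases i <;> fin_cases j <;> simp [Matrix.diagonal_apply, Matrix.vecHead, Matrix.vecTail]
  have hDg2 : Matrix.diagonal ![s1, s2, s3] = !![s1, 0, 0; 0, s2, 0; 0, 0, s3] := by
    ext i j; fin_cases i <;> fin_cases j <;> simp [Matrix.diagonal_apply, Matrix.vecHead, Matrix.vecTail]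
  have houter : outer ![n1, 0, n3] = !![n1*n1, 0, n1*n3; 0, 0, 0; n3*n1, 0, n3*n3] := by
    ext i j; fin_cases i <;> fin_cases j <;> simp [outer, Matrix.vecMulVec_apply, Matrix.vecHead, Matrix.vecTail]
  refine ⟨!![c, 0, -s; 0, 1, 0; s, 0, c], ![n1, 0, n3], ⟨?_, ?_⟩, ?_, rfl, ?_⟩
  · rw [hT, Matrix.mul_fin_three, Matrix.one_fin_three]
    ext i j
    fin_cases i <;> fin_cases j <;> simp [Matrix.vecHead, Matrix.vecTail] <;> nlinarith [hc2, hs2']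
  · rw [Matrix.det_fin_three]
    simp
    nlinarith [hc2, hs2']
  · show n1 ^ 2 + 0 ^ 2 + n3 ^ 2 = 1
    nlinarith [hn1sq, hn3sq]
  · rw [hT, hDg, hDg2, houter, Matrix.mul_fin_three, Matrix.mul_fin_three]
    ext i j
    fin_cases i <;> fin_cases j <;>
      simp [Matrix.smul_apply, Matrix.add_apply, smul_eq_mul, Matrix.vecHead, Matrix.vecTail] <;>
      first
        | ring1
        | linear_combination hus2
        | linear_combination -hus2
        | linear_combination cross
        | linear_combination -cross
        | linear_combination p*hc2 + q*hs2' + hDS - e*hn1sq + hA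
        | linear_combination -(p*hc2 + q*hs2' + hDS - e*hn1sq + hA)
        | linear_combination p*hs2' + q*hc2 - hDS - e*hn3sq + hA + htr
        | linear_combination -(p*hs2' + q*hc2 - hDS - e*hn3sq + hA + htr)
        | linear_combination p*hs2' + q*hc2 - hDS - e*hn3sq - hA - htr
        | linear_combination p*hs2' + q*hc2 - hDS - e*hn3sq + hA - htr
        | linear_combination p*hs2' + q*hc2 - hDS - e*hn3sq - hA + htr
        | nlinarith [hc2, hs2', hn1sq, hn3sq, cross, hDS, hA, htr, hus2]

theorem statement5 (s1 s2 s3 ua ub : ℝ)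
    (hs1 : 0 < s1) (hs12 : s1 < s2) (hs23 : s2 < s3) (hsum : s1 + s2 + s3 = 1)
    (hua : bpoly s1 s2 s3 ua = 0) (hub : bpoly s1 s2 s3 ub = 0)
    (huamin : ∀ x : ℝ, bpoly s1 s2 s3 x = 0 → ua ≤ x)
    (hubmax : ∀ x : ℝ, bpoly s1 s2 s3 x = 0 → x ≤ ub)
    (hua1 : s1 ≤ ua) (hua2 : ua < 1 / 3) (hub1 : 1 / 3 < ub) (hub2 : ub ≤ s3) :
    (∃ (R : Matrix (Fin 3) (Fin 3) ℝ) (n : Fin 3 → ℝ),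
      IsSO3 R ∧ unitVec n ∧ n 1 = 0 ∧
      Rᵀ * Matrix.diagonal ![ua, ua, 1 - 2 * ua] * R =
        (ua / s2) • Matrix.diagonal ![s1, s2, s3] + (1 - ua / s2) • outer n) ∧
    (∃ (R' : Matrix (Fin 3) (Fin 3) ℝ) (m : Fin 3 → ℝ),
      IsSO3 R' ∧ unitVec m ∧ m 1 = 0 ∧
      R'ᵀ * Matrix.diagonal ![1 - 2 * ub, ub, ub] * R' =
        (ub / s2) • Matrix.diagonal ![s1, s2, s3] + (1 - ub / s2) • outer m) := by
  have hs2pos : 0 < s2 := lt_trans hs1 hs12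
  have hs1e : s1 = 1 - s2 - s3 := by linarith
  subst hs1e
  have hab : ua < ub := lt_trans hua2 hub1
  rw [bpoly] at hua hub
  have h6 : (ua - ub) * (6*s2*(ua+ub) + ((1-s2-s3)*s3 - 3*s2 - 4*s2^2)) = 0 := by
    linear_combination hua - hub
  have hC : (1-s2-s3)*s3 - 3*s2 - 4*s2^2 = -(6*s2)*(ua+ub) := by
    rcases mul_eq_zero.mp h6 with h | h
    · exact absurd h (sub_ne_zero.2 hab.ne)
    · linarith
  have hP2 : s2 * s2 = s2 * (3*(ua*ub)) := by
    linear_combination hua/2 - (ua/2)*hC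
  have hP : s2 = 3*(ua*ub) := mul_left_cancel₀ hs2pos.ne' hP2
  have J0 : 6*((s2-ua)*(s2-ub)) = (s2-(1-s2-s3))*(s2-s3) := by
    linear_combination -hC - 2*hP
  have J1 : 6*((s2-ua*(2*s2+s3))*(s2-ub*(2*s2+s3))) = s3*(s3-s2)*((1-s2-s3)-s2) := by
    linear_combination -(2*s2+s3)*hC - 2*(2*s2+s3)^2*hP
  have J2 : 6*((s2-ua*(2*s2+(1-s2-s3)))*(s2-ub*(2*s2+(1-s2-s3))))
      = (1-s2-s3)*((1-s2-s3)-s2)*(s3-s2) := by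
    linear_combination -(2*s2+(1-s2-s3))*hC - 2*(2*s2+(1-s2-s3))^2*hP
  have hs3pos : 0 < s3 := lt_trans hs2pos hs23
  have hprod0 : (s2-ua)*(s2-ub) < 0 := by nlinarith [J0]
  have huas2 : ua < s2 := by nlinarith [hprod0, hab]
  have hs2ub : s2 < ub := by nlinarith [hprod0, hab]
  have hK3 : (0:ℝ) < 2*s2+s3 := by linarith
  have hK1 : (0:ℝ) < 2*s2+(1-s2-s3) := by linarith
  have hprod1 : (s2-ua*(2*s2+s3))*(s2-ub*(2*s2+s3)) < 0 := by nlinarith [J1]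
  have hprod2 : (s2-ua*(2*s2+(1-s2-s3)))*(s2-ub*(2*s2+(1-s2-s3))) < 0 := by nlinarith [J2]
  have hd1 : s2-ub*(2*s2+s3) < s2-ua*(2*s2+s3) := by
    have := mul_lt_mul_of_pos_right hab hK3; linarith
  have hd2 : s2-ub*(2*s2+(1-s2-s3)) < s2-ua*(2*s2+(1-s2-s3)) := by
    have := mul_lt_mul_of_pos_right hab hK1; linarith
  obtain ⟨h0b', h0a'⟩ := sign_split hprod1 hd1
  obtain ⟨h1b', h1a'⟩ := sign_split hprod2 hd2
  have h0a : ua*(2*s2+s3) < s2 := by linarith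
  have h0b : s2 < ub*(2*s2+s3) := by linarith
  have h1a : ua*(2*s2+(1-s2-s3)) < s2 := by linarith
  have h1b : s2 < ub*(2*s2+(1-s2-s3)) := by linarith
  have hs31 : (0:ℝ) < s3 - (1-s2-s3) := by linarith
  constructor
  · -- case alpha
    have hdenA : (0:ℝ) < (s2-ua)*(s3-(1-s2-s3)) := mul_pos (by linarith) hs31
    have ht0 : 0 ≤ ((s3-s2)*(s2 - ua*(2*s2+s3))) / ((s2-ua)*(s3-(1-s2-s3))) :=
      le_of_lt (div_pos (mul_pos (by linarith) (by linarith)) hdenA)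
    have ht1 : ((s3-s2)*(s2 - ua*(2*s2+s3))) / ((s2-ua)*(s3-(1-s2-s3))) ≤ 1 := by
      rw [div_le_one hdenA]
      nlinarith [mul_pos (show (0:ℝ) < s2-(1-s2-s3) by linarith)
        (show (0:ℝ) < s2 - ua*(2*s2+(1-s2-s3)) by linarith)]
    have htr : (ua/s2)*(1-s2-s3) + (ua/s2)*s3 + (1 - ua/s2) = ua + (1-2*ua) := by
      field_simp
      ring
    have hdet : ((ua/s2)*(1-s2-s3))*((ua/s2)*s3) + (ua/s2)*(1 - ua/s2)*
        (s3*(1-((s3-s2)*(s2 - ua*(2*s2+s3))) / ((s2-ua)*(s3-(1-s2-s3))))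
         +(1-s2-s3)*(((s3-s2)*(s2 - ua*(2*s2+s3))) / ((s2-ua)*(s3-(1-s2-s3)))))
        = ua*(1-2*ua) := by
      have h1 : s2 - ua ≠ 0 := by linarith
      have h2 : s3 - (1-s2-s3) ≠ 0 := by linarith
      field_simp
      ring
    exact core_aux (1-s2-s3) s2 s3 ua ua (1-2*ua) _ hs2pos.ne' (by linarith) ht0 ht1 htr hdet
  · -- case beta
    have hdenB : (0:ℝ) < (ub-s2)*(s3-(1-s2-s3)) := mul_pos (by linarith) hs31
    have ht0 : 0 ≤ ((s3-s2)*(ub*(2*s2+s3) - s2)) / ((ub-s2)*(s3-(1-s2-s3))) :=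
      le_of_lt (div_pos (mul_pos (by linarith) (by linarith)) hdenB)
    have ht1 : ((s3-s2)*(ub*(2*s2+s3) - s2)) / ((ub-s2)*(s3-(1-s2-s3))) ≤ 1 := by
      rw [div_le_one hdenB]
      nlinarith [mul_pos (show (0:ℝ) < s2-(1-s2-s3) by linarith)
        (show (0:ℝ) < ub*(2*s2+(1-s2-s3)) - s2 by linarith)]
    have htr : (ub/s2)*(1-s2-s3) + (ub/s2)*s3 + (1 - ub/s2) = (1-2*ub) + ub := by
      field_simp
      ring
    have hdet : ((ub/s2)*(1-s2-s3))*((ub/s2)*s3) + (ub/s2)*(1 - ub/s2)*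
        (s3*(1-((s3-s2)*(ub*(2*s2+s3) - s2)) / ((ub-s2)*(s3-(1-s2-s3))))
         +(1-s2-s3)*(((s3-s2)*(ub*(2*s2+s3) - s2)) / ((ub-s2)*(s3-(1-s2-s3)))))
        = (1-2*ub)*ub := by
      have h1 : ub - s2 ≠ 0 := by linarith
      have h2 : s3 - (1-s2-s3) ≠ 0 := by linarith
      field_simp
      ring
    exact core_aux (1-s2-s3) s2 s3 ub (1-2*ub) ub _ hs2pos.ne' (by linarith) ht0 ht1 htr hdet
end
end

section
/- Let F = diag(f₁,f₂,f₃) with 0 < f₁ < f₂ < f₃ and tr F = 1, let G be a real symmetric 3×3 matrix with tr G = 1, let λ ∈ ℝ \ {0,1}, let n ∈ ℝ³ be a unit vector and R ∈ SO(3) with Rᵀ G R = λ F + (1−λ) n⊗n. Then n₁²(f₂+f₃) + n₂²(f₃+f₁) + n₃²(f₁+f₂) = (i₂(G) − λ² i₂(F)) / (λ(1−λ)) and n₁² f₂ f₃ + n₂² f₃ f₁ + n₃² f₁ f₂ = (i₃(G) − λ³ i₃(F)) / (λ²(1−λ)). (Identities (coeff) in the proof of Lemma 6.1.) -/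
open Matrix Set

noncomputable section

theorem statement6 (f1 f2 f3 : ℝ)
    (hf1 : 0 < f1) (hf12 : f1 < f2) (hf23 : f2 < f3) (hfsum : f1 + f2 + f3 = 1)
    (F : Matrix (Fin 3) (Fin 3) ℝ) (hF : F = Matrix.diagonal ![f1, f2, f3])
    (G : Matrix (Fin 3) (Fin 3) ℝ) (hGsym : Gᵀ = G) (hGtr : Matrix.trace G = 1)
    (lam : ℝ) (hlam0 : lam ≠ 0) (hlam1 : lam ≠ 1)
    (n : Fin 3 → ℝ) (hn : unitVec n)
    (R : Matrix (Fin 3) (Fin 3) ℝ) (hR : IsSO3 R)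
    (heq : Rᵀ * G * R = lam • F + (1 - lam) • outer n) :
    n 0 ^ 2 * (f2 + f3) + n 1 ^ 2 * (f3 + f1) + n 2 ^ 2 * (f1 + f2) =
      (i2 G - lam ^ 2 * i2 F) / (lam * (1 - lam)) ∧
    n 0 ^ 2 * f2 * f3 + n 1 ^ 2 * f3 * f1 + n 2 ^ 2 * f1 * f2 =
      (i3 G - lam ^ 3 * i3 F) / (lam ^ 2 * (1 - lam)) := by

  have hRR : R * Rᵀ = 1 := mul_eq_one_comm.mp hR.1
  set M : Matrix (Fin 3) (Fin 3) ℝ := lam • F + (1 - lam) • outer n with hM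
  have h2 : Matrix.trace (G * G) = Matrix.trace (M * M) := by
    rw [← heq]
    have : Rᵀ * G * R * (Rᵀ * G * R) = Rᵀ * (G * G) * R := by
      rw [show Rᵀ * G * R * (Rᵀ * G * R) = Rᵀ * G * (R * Rᵀ) * G * R by
        simp [Matrix.mul_assoc], hRR]
      simp [Matrix.mul_assoc]
    rw [this, Matrix.trace_mul_cycle, ← Matrix.mul_assoc, hRR, Matrix.one_mul]
  have h3 : G.det = M.det := by
    rw [← heq, Matrix.det_mul, Matrix.det_mul, Matrix.det_transpose, hR.2]
    ring
  have hlam1' : 1 - lam ≠ 0 := sub_ne_zero.mpr (Ne.symm hlam1)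
  have hn' : n 0 ^ 2 + n 1 ^ 2 + n 2 ^ 2 = 1 := hn
  have htrMM : Matrix.trace (M * M) =
      lam ^ 2 * (f1 ^ 2 + f2 ^ 2 + f3 ^ 2)
        + 2 * lam * (1 - lam) * (n 0 ^ 2 * f1 + n 1 ^ 2 * f2 + n 2 ^ 2 * f3)
        + (1 - lam) ^ 2 := by
    subst hF
    simp [hM, outer, Matrix.trace_fin_three, Matrix.mul_apply, Fin.sum_univ_three,
      Matrix.vecMulVec_apply, Matrix.diagonal, Matrix.add_apply, Matrix.smul_apply]
    linear_combination ((1 - lam) ^ 2 * (n 0 ^ 2 + n 1 ^ 2 + n 2 ^ 2 + 1)) * hn'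
  have hdetM : M.det = lam ^ 3 * (f1 * f2 * f3)
      + lam ^ 2 * (1 - lam) * (n 0 ^ 2 * f2 * f3 + n 1 ^ 2 * f3 * f1 + n 2 ^ 2 * f1 * f2) := by
    subst hF
    simp [hM, Matrix.det_fin_three, outer, Matrix.vecMulVec_apply, Matrix.diagonal,
      Matrix.add_apply, Matrix.smul_apply]
    ring
  have hi2F : i2 F = f1 * f2 + f2 * f3 + f3 * f1 := by
    subst hF
    simp [i2, Matrix.trace_fin_three, Matrix.mul_apply, Fin.sum_univ_three,
      Matrix.diagonal]
    ring
  constructor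
  · rw [i2, hGtr, h2, htrMM, hi2F, eq_div_iff (mul_ne_zero hlam0 hlam1')]
    linear_combination (lam * (1 - lam) * (f1 + f2 + f3)) * hn' +
      (lam * (1 - lam) + lam ^ 2 * (f1 + f2 + f3 + 1) / 2) * hfsum
  · rw [i3, h3, hdetM, i3]
    subst hF
    rw [Matrix.det_diagonal]
    simp only [Fin.prod_univ_three, Matrix.cons_val_zero, Matrix.cons_val_one, Matrix.head_cons,
      Matrix.cons_val_two, Matrix.tail_cons]
    rw [eq_div_iff (mul_ne_zero (pow_ne_zero 2 hlam0) hlam1')]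
    ring
end
end

section
/- Let F = diag(f₁,f₂,f₃) with 0 < f₁ < f₂ < f₃ and tr F = 1, let G be a real symmetric 3×3 matrix with tr G = 1, let λ ∈ ℝ \ {0,1}, let n ∈ ℝ³ be a unit vector and R ∈ SO(3) with Rᵀ G R = λ F + (1−λ) n⊗n. Write x_F := i₂(F), x_G := i₂(G), y_F := i₃(F), y_G := i₃(G). Then for every t ∈ [0,1], setting η := η(λ,t) and M(t) := η F + (1−η) n⊗n, one has i₂(M(t)) = ((x_G − λ² x_F)/(λ(1−λ))) η − ((x_G − λ x_F)/(λ(1−λ))) η² and i₃(M(t)) = ((y_G − λ³ y_F)/(λ²(1−λ))) η² − ((y_G − λ² y_F)/(λ²(1−λ))) η³. (Lemma 6.1, formula (s92).) -/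
open Matrix Set

noncomputable section

private lemma key_i2 (f1 f2 f3 lam e : ℝ) (hlam0 : lam ≠ 0) (hlam1 : lam ≠ 1)
    (n : Fin 3 → ℝ) :
    i2 (e • Matrix.diagonal ![f1, f2, f3] + (1 - e) • Matrix.vecMulVec n n) =
      ((i2 (lam • Matrix.diagonal ![f1, f2, f3] + (1 - lam) • Matrix.vecMulVec n n)
         - lam ^ 2 * i2 (Matrix.diagonal ![f1, f2, f3])) / (lam * (1 - lam))) * e -
      ((i2 (lam • Matrix.diagonal ![f1, f2, f3] + (1 - lam) • Matrix.vecMulVec n n)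
         - lam * i2 (Matrix.diagonal ![f1, f2, f3])) / (lam * (1 - lam))) * e ^ 2 := by
  have h1 : (1:ℝ) - lam ≠ 0 := sub_ne_zero.mpr (Ne.symm hlam1)
  simp only [i2, Matrix.trace_fin_three, Matrix.mul_apply, Fin.sum_univ_three,
    Matrix.add_apply, Matrix.smul_apply, Matrix.diagonal_apply, Matrix.vecMulVec_apply,
    smul_eq_mul]
  simp only [Fin.isValue, Matrix.cons_val_zero, Matrix.cons_val_one, Matrix.head_cons,
    Matrix.cons_val_two, Matrix.tail_cons, if_true, if_false, reduceIte]
  simp only [Fin.reduceEq, ite_true, ite_false, mul_zero, zero_mul, add_zero, zero_add, mul_one]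
  field_simp
  ring

private lemma key_i3 (f1 f2 f3 lam e : ℝ) (hlam0 : lam ≠ 0) (hlam1 : lam ≠ 1)
    (n : Fin 3 → ℝ) :
    i3 (e • Matrix.diagonal ![f1, f2, f3] + (1 - e) • Matrix.vecMulVec n n) =
      ((i3 (lam • Matrix.diagonal ![f1, f2, f3] + (1 - lam) • Matrix.vecMulVec n n)
         - lam ^ 3 * i3 (Matrix.diagonal ![f1, f2, f3])) / (lam ^ 2 * (1 - lam))) * e ^ 2 -
      ((i3 (lam • Matrix.diagonal ![f1, f2, f3] + (1 - lam) • Matrix.vecMulVec n n)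
         - lam ^ 2 * i3 (Matrix.diagonal ![f1, f2, f3])) / (lam ^ 2 * (1 - lam))) * e ^ 3 := by
  have h1 : (1:ℝ) - lam ≠ 0 := sub_ne_zero.mpr (Ne.symm hlam1)
  simp only [i3, Matrix.det_fin_three,
    Matrix.add_apply, Matrix.smul_apply, Matrix.diagonal_apply, Matrix.vecMulVec_apply,
    smul_eq_mul]
  simp only [Fin.isValue, Matrix.cons_val_zero, Matrix.cons_val_one, Matrix.head_cons,
    Matrix.cons_val_two, Matrix.tail_cons, if_true, if_false, reduceIte]
  simp only [Fin.reduceEq, ite_true, ite_false, mul_zero, zero_mul, add_zero, zero_add, mul_one]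
  field_simp
  ring

theorem statement7 (f1 f2 f3 : ℝ)
    (hf1 : 0 < f1) (hf12 : f1 < f2) (hf23 : f2 < f3) (hfsum : f1 + f2 + f3 = 1)
    (F : Matrix (Fin 3) (Fin 3) ℝ) (hF : F = Matrix.diagonal ![f1, f2, f3])
    (G : Matrix (Fin 3) (Fin 3) ℝ) (hGsym : Gᵀ = G) (hGtr : Matrix.trace G = 1)
    (lam : ℝ) (hlam0 : lam ≠ 0) (hlam1 : lam ≠ 1)
    (n : Fin 3 → ℝ) (hn : unitVec n)
    (R : Matrix (Fin 3) (Fin 3) ℝ) (hR : IsSO3 R)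
    (heq : Rᵀ * G * R = lam • F + (1 - lam) • outer n) :
    ∀ t ∈ Set.Icc (0 : ℝ) 1,
      i2 (Mcurve F n lam t) =
        ((i2 G - lam ^ 2 * i2 F) / (lam * (1 - lam))) * etaFun lam t -
          ((i2 G - lam * i2 F) / (lam * (1 - lam))) * etaFun lam t ^ 2 ∧
      i3 (Mcurve F n lam t) =
        ((i3 G - lam ^ 3 * i3 F) / (lam ^ 2 * (1 - lam))) * etaFun lam t ^ 2 -
          ((i3 G - lam ^ 2 * i3 F) / (lam ^ 2 * (1 - lam))) * etaFun lam t ^ 3 := by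
  
  have hRR : R * Rᵀ = 1 := mul_eq_one_comm.mp hR.1
  have ht1 : Matrix.trace (Rᵀ * G * R) = Matrix.trace G := by
    rw [Matrix.trace_mul_cycle, hRR, Matrix.one_mul]
  have hsq : (Rᵀ * G * R) * (Rᵀ * G * R) = Rᵀ * (G * G) * R := by
    simp only [Matrix.mul_assoc]
    rw [← Matrix.mul_assoc R Rᵀ, hRR, Matrix.one_mul]
  have ht2 : Matrix.trace ((Rᵀ * G * R) * (Rᵀ * G * R)) = Matrix.trace (G * G) := by
    rw [hsq, Matrix.trace_mul_cycle, hRR, Matrix.one_mul]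
  have hG2 : i2 G = i2 (lam • F + (1 - lam) • outer n) := by
    rw [← heq]; unfold i2; rw [ht1, ht2]
  have hG3 : i3 G = i3 (lam • F + (1 - lam) • outer n) := by
    rw [← heq]; unfold i3
    rw [Matrix.det_mul, Matrix.det_mul, Matrix.det_transpose, hR.2, mul_one, one_mul]
  subst hF
  intro t _
  refine ⟨?_, ?_⟩
  · rw [hG2]
    simpa [Mcurve, outer] using
      key_i2 f1 f2 f3 lam (etaFun lam t) hlam0 hlam1 n
  · rw [hG3]
    simpa [Mcurve, outer] using
      key_i3 f1 f2 f3 lam (etaFun lam t) hlam0 hlam1 n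
end
end

section
/- For every t ∈ [0,1], with E₂(t) := s₂ η(α,t), one has i₂(M_α(t)) = ((2 − 3u_α)/u_α) (2u_α − E₂(t)) E₂(t) and i₃(M_α(t)) = ((1 − 2u_α)/u_α) (3u_α − 2E₂(t)) E₂(t)². (Lemma 6.1, formula (mainxy).) -/
open Matrix Set

noncomputable section

theorem statement9 (s1 s2 s3 ua : ℝ)
    (hs1 : 0 < s1) (hs12 : s1 < s2) (hs23 : s2 < s3) (hsum : s1 + s2 + s3 = 1)
    (hua : bpoly s1 s2 s3 ua = 0) (huamin : ∀ x : ℝ, bpoly s1 s2 s3 x = 0 → ua ≤ x)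
    (hua1 : s1 ≤ ua) (hua2 : ua < 1 / 3)
    (S : Matrix (Fin 3) (Fin 3) ℝ) (hS : S = Matrix.diagonal ![s1, s2, s3])
    (n : Fin 3 → ℝ) (hn : unitVec n) (hn1 : n 1 = 0)
    (R : Matrix (Fin 3) (Fin 3) ℝ) (hR : IsSO3 R)
    (heq : Rᵀ * Matrix.diagonal ![ua, ua, 1 - 2 * ua] * R =
      (ua / s2) • S + (1 - ua / s2) • outer n) :
    ∀ t ∈ Set.Icc (0 : ℝ) 1,
      i2 (Mcurve S n (ua / s2) t) =
        ((2 - 3 * ua) / ua) * (2 * ua - s2 * etaFun (ua / s2) t) *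
          (s2 * etaFun (ua / s2) t) ∧
      i3 (Mcurve S n (ua / s2) t) =
        ((1 - 2 * ua) / ua) * (3 * ua - 2 * (s2 * etaFun (ua / s2) t)) *
          (s2 * etaFun (ua / s2) t) ^ 2 := by
  have hs2pos : (0:ℝ) < s2 := lt_trans hs1 hs12
  have hs2 : s2 ≠ 0 := ne_of_gt hs2pos
  have huapos : (0:ℝ) < ua := lt_of_lt_of_le hs1 hua1
  have hua0 : ua ≠ 0 := ne_of_gt huapos
  have huane : ua ≠ s2 := by
    intro h
    rw [h] at hua
    unfold bpoly at hua
    have hfac : s2 * (s2 - s1) * (s2 - s3) = 0 := by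
      linear_combination hua - s2 ^ 2 * hsum
    have h1 : 0 < s2 * (s2 - s1) * (s3 - s2) :=
      mul_pos (mul_pos hs2pos (sub_pos.2 hs12)) (sub_pos.2 hs23)
    nlinarith [hfac, h1]
  have hsub : s2 - ua ≠ 0 := fun h => huane (by linarith [sub_eq_zero.mp h])
  -- bpoly relation
  have hbb : ua * (s1 * s3) = 3 * s2 * ua + 4 * s2 ^ 2 * ua - 6 * s2 * ua ^ 2 - 2 * s2 ^ 2 := by
    unfold bpoly at hua
    linear_combination hua
  -- unit vector without n 1
  have hn' : n 0 ^ 2 + n 2 ^ 2 = 1 := by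
    have := hn
    unfold unitVec at this
    rw [hn1] at this
    linarith [this, sq_nonneg (0:ℝ)]
  -- determinant equation from heq
  have hdet := congrArg Matrix.det heq
  rw [Matrix.det_mul, Matrix.det_mul, Matrix.det_transpose, hR.2] at hdet
  simp only [hS, outer, Matrix.det_diagonal, Fin.prod_univ_three, Matrix.det_fin_three,
    Matrix.add_apply, Matrix.smul_apply, Matrix.diagonal_apply, Matrix.vecMulVec_apply,
    Matrix.cons_val_zero, Matrix.cons_val_one, Matrix.head_cons, Matrix.cons_val_two,
    Matrix.tail_cons, smul_eq_mul, hn1, Fin.ext_iff, Fin.val_zero, Fin.val_one,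
    Fin.val_two] at hdet
  norm_num at hdet
  field_simp at hdet
  have hKmul : (ua ^ 2 * (s2 - ua)) * (s1 * (n 2 * n 2) + s3 * (n 0 * n 0)) =
      (ua ^ 2 * (s2 - ua)) * (3 * s2 * (1 - 2 * ua)) := by
    unfold bpoly at hua
    linear_combination -ua * hdet - ua ^ 2 * hua
  have hK : s1 * (n 2 * n 2) + s3 * (n 0 * n 0) = 3 * s2 * (1 - 2 * ua) :=
    mul_left_cancel₀ (mul_ne_zero (pow_ne_zero 2 hua0) hsub) hKmul
  intro t ht
  constructor
  · show i2 (Mcurve S n (ua / s2) t) = _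
    simp only [i2, Mcurve, hS, outer, Matrix.trace_fin_three, Matrix.mul_apply,
      Fin.sum_univ_three, Matrix.add_apply, Matrix.smul_apply, Matrix.diagonal_apply,
      Matrix.vecMulVec_apply, Matrix.cons_val_zero, Matrix.cons_val_one, Matrix.head_cons,
      Matrix.cons_val_two, Matrix.tail_cons, smul_eq_mul, hn1, Fin.ext_iff, Fin.val_zero,
      Fin.val_one, Fin.val_two]
    norm_num
    set E := etaFun (ua / s2) t with hE
    field_simp
    linear_combination (2 * ua * E * s2 * (1 - E)) * hn' + (2 * ua * E ^ 2 * s2) * hsum +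
      (2 * ua * E * (1 - E)) * hK + (2 * E ^ 2) * hbb
  · show i3 (Mcurve S n (ua / s2) t) = _
    simp only [i3, Mcurve, hS, outer, Matrix.det_fin_three, Matrix.add_apply,
      Matrix.smul_apply, Matrix.diagonal_apply, Matrix.vecMulVec_apply,
      Matrix.cons_val_zero, Matrix.cons_val_one, Matrix.head_cons,
      Matrix.cons_val_two, Matrix.tail_cons, smul_eq_mul, hn1, Fin.ext_iff, Fin.val_zero,
      Fin.val_one, Fin.val_two]
    norm_num
    set E := etaFun (ua / s2) t with hE
    field_simp
    linear_combination (E ^ 2 * ua * (1 - E)) * hK + E ^ 3 * hbb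
end
end

section
/- Let u_α be the smallest root of b. Then (2/3) s₂ < u_α < (s₁ + 2 s₂)/3; in particular 3u_α − 2s₂ > 0 and s₁ + 2s₂ − 3u_α > 0. (Claims established in the proofs of Proposition 5.2 and Proposition 7.1.) -/
open Matrix Set

noncomputable section

theorem statement10 (s1 s2 s3 ua : ℝ)
    (hs1 : 0 < s1) (hs12 : s1 < s2) (hs23 : s2 < s3) (hsum : s1 + s2 + s3 = 1)
    (hua : bpoly s1 s2 s3 ua = 0) (huamin : ∀ x : ℝ, bpoly s1 s2 s3 x = 0 → ua ≤ x) :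
    2 / 3 * s2 < ua ∧ ua < (s1 + 2 * s2) / 3 ∧
    3 * ua - 2 * s2 > 0 ∧ s1 + 2 * s2 - 3 * ua > 0 := by
  have hs2 : 0 < s2 := hs1.trans hs12
  have hs3 : 0 < s3 := hs2.trans hs23
  have hs2half : s2 < 1/2 := by linarith
  unfold bpoly at hua
  -- lower bound
  have hlow : 2 / 3 * s2 < ua := by
    by_contra h
    push_neg at h
    nlinarith [sq_nonneg (3*ua - 2*s2), mul_pos hs1 (mul_pos hs2 hs3),
      mul_nonneg (mul_nonneg hs2.le (sub_nonneg.2 h)) (sub_nonneg.2 h),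
      mul_nonneg (sub_nonneg.2 h) (by nlinarith : (0:ℝ) ≤ 3*s2 - 4*s2^2 - s1*s3)]
  -- value at p is negative
  have hbq : bpoly s1 s2 s3 (2/3*s2) > 0 := by
    unfold bpoly; nlinarith [mul_pos hs1 (mul_pos hs2 hs3)]
  have hbp : bpoly s1 s2 s3 ((s1 + 2*s2)/3) < 0 := by
    unfold bpoly
    have h3 : s3 = 1 - s1 - s2 := by linarith
    rw [h3]
    nlinarith [mul_pos (mul_pos hs1 (sub_pos.2 hs12)) (show (0:ℝ) < 1-s1-2*s2 by linarith)]
  have hqp : (2/3*s2 : ℝ) ≤ (s1 + 2*s2)/3 := by linarith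
  have hcont : ContinuousOn (fun x => bpoly s1 s2 s3 x) (Set.Icc (2/3*s2) ((s1+2*s2)/3)) := by
    apply Continuous.continuousOn; unfold bpoly; continuity
  have := intermediate_value_Icc' hqp hcont
  have h0 : (0:ℝ) ∈ Set.Icc (bpoly s1 s2 s3 ((s1+2*s2)/3)) (bpoly s1 s2 s3 (2/3*s2)) :=
    ⟨hbp.le, hbq.le⟩
  obtain ⟨x, hxmem, hx0⟩ := this h0
  have hxroot : bpoly s1 s2 s3 x = 0 := hx0
  have hua_le : ua ≤ x := huamin x hxroot
  have hxp : x < (s1 + 2*s2)/3 := by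
    rcases lt_or_eq_of_le hxmem.2 with h | h
    · exact h
    · exfalso; rw [h] at hxroot; linarith [hbp, hxroot.symm.le]
  have hup : ua < (s1 + 2*s2)/3 := lt_of_le_of_lt hua_le hxp
  exact ⟨hlow, hup, by linarith, by linarith⟩
end
end

section
/- With E₂(t) := s₂ α/(α + t(1−α)) and r(p,q) := (E₂(p)/E₂(q))·((2u_α − E₂(p))/(2u_α − E₂(q))), the following hold: (a) 3u_α − 2E₂(q) > 0 for every q ∈ [0,1]; (b) for all 0 ≤ p < q ≤ 1 and every λ ∈ ℝ, 1 − λ(2−λ) r(p,q) > 0; (c) for p = q and every λ ≠ 1, 1 − λ(2−λ) r(p,p) > 0. (Proposition 5.2.) -/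
open Matrix Set

noncomputable section

set_option maxHeartbeats 1600000 in
theorem statement11 (s1 s2 s3 ua : ℝ)
    (hs1 : 0 < s1) (hs12 : s1 < s2) (hs23 : s2 < s3) (hsum : s1 + s2 + s3 = 1)
    (hua : bpoly s1 s2 s3 ua = 0) (huamin : ∀ x : ℝ, bpoly s1 s2 s3 x = 0 → ua ≤ x)
    (hua1 : s1 ≤ ua) (hua2 : ua < 1 / 3)
    (E2 : ℝ → ℝ) (hE2 : ∀ t : ℝ, E2 t = s2 * (ua / s2) / (ua / s2 + t * (1 - ua / s2))) :
    (∀ q ∈ Set.Icc (0 : ℝ) 1, 3 * ua - 2 * E2 q > 0) ∧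
    (∀ p q : ℝ, 0 ≤ p → p < q → q ≤ 1 → ∀ lam : ℝ,
      1 - lam * (2 - lam) * ((E2 p / E2 q) * ((2 * ua - E2 p) / (2 * ua - E2 q))) > 0) ∧
    (∀ p ∈ Set.Icc (0 : ℝ) 1, ∀ lam : ℝ, lam ≠ 1 →
      1 - lam * (2 - lam) * ((E2 p / E2 p) * ((2 * ua - E2 p) / (2 * ua - E2 p))) > 0) := by
  have hs2 : 0 < s2 := lt_trans hs1 hs12
  have hs3 : 0 < s3 := lt_trans hs2 hs23
  have hua0 : 0 < ua := lt_of_lt_of_le hs1 hua1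
  -- key identity from b(ua)=0
  have hkey : (2:ℝ)/3*(s1*s2*s3)*ua = -(2*s2^2/3)*(2*s2-3*ua)*(1-2*ua) := by
    have h := hua
    unfold bpoly at h
    linear_combination (2*s2/3) * h
  have key1 : 2*s2 < 3*ua := by
    by_contra hcon
    push_neg at hcon
    nlinarith [mul_pos (mul_pos (mul_pos hs1 hs2) hs3) hua0,
      mul_nonneg (mul_nonneg (sq_nonneg s2) (by linarith : (0:ℝ) ≤ 2*s2-3*ua))
        (by linarith : (0:ℝ) ≤ 1-2*ua)]
  have hne : ua ≠ s2 := by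
    intro h
    rw [h] at hua
    unfold bpoly at hua
    have hz : s2*((s3-s2)*(s2-s1)) = 0 := by linear_combination (-1)*hua + s2^2*hsum
    nlinarith [mul_pos hs2 (mul_pos (sub_pos.2 hs23) (sub_pos.2 hs12))]
  have hDpos : ∀ t : ℝ, 0 ≤ t → t ≤ 1 → 0 < ua + t*(s2-ua) := by
    intro t ht0 ht1
    rcases le_total ua s2 with h|h
    · nlinarith [mul_nonneg ht0 (sub_nonneg.2 h)]
    · nlinarith [mul_nonneg (sub_nonneg.2 ht1) (sub_nonneg.2 h)]
  have hE2' : ∀ t : ℝ, 0 ≤ t → t ≤ 1 → E2 t = ua*s2/(ua + t*(s2-ua)) := by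
    intro t ht0 ht1
    have hD := hDpos t ht0 ht1
    have hden : ua/s2 + t*(1-ua/s2) = (ua + t*(s2-ua))/s2 := by
      field_simp
    have h1 : s2*(ua/s2) = ua := by field_simp
    rw [hE2 t, hden, h1, div_div_eq_mul_div]
  have hE2pos : ∀ t : ℝ, 0 ≤ t → t ≤ 1 → 0 < E2 t := by
    intro t h0 h1
    rw [hE2' t h0 h1]
    exact div_pos (mul_pos hua0 hs2) (hDpos t h0 h1)
  have hE2lt : ∀ t : ℝ, 0 ≤ t → t ≤ 1 → 2 * E2 t < 3 * ua := by
    intro t h0 h1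
    have hD := hDpos t h0 h1
    have h2s : 2*s2 < 3*(ua + t*(s2-ua)) := by
      rcases le_total ua s2 with h|h
      · nlinarith [mul_nonneg h0 (sub_nonneg.2 h)]
      · nlinarith [mul_nonneg (sub_nonneg.2 h1) (sub_nonneg.2 h)]
    rw [hE2' t h0 h1, ← mul_div_assoc, div_lt_iff₀ hD]
    nlinarith [mul_pos hua0 (by linarith : (0:ℝ) < 3*(ua + t*(s2-ua)) - 2*s2)]
  refine ⟨?_, ?_, ?_⟩
  · intro q hq
    have := hE2lt q hq.1 hq.2
    linarith
  · intro p q hp hpq hq1 lam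
    have hq0 : 0 ≤ q := le_trans hp (le_of_lt hpq)
    have hp1 : p ≤ 1 := le_trans (le_of_lt hpq) hq1
    have hq0' : 0 < q := lt_of_le_of_lt hp hpq
    have hp1' : p < 1 := lt_of_lt_of_le hpq hq1
    have hDp := hDpos p hp hp1
    have hDq := hDpos q hq0 hq1
    have hA := hE2' p hp hp1
    have hB := hE2' q hq0 hq1
    have hApos := hE2pos p hp hp1
    have hBpos := hE2pos q hq0 hq1
    have hA2 : 0 < 2*ua - E2 p := by have := hE2lt p hp hp1; linarith
    have hB2 : 0 < 2*ua - E2 q := by have := hE2lt q hq0 hq1; linarith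
    have hg : 0 < s2*(p*(1-q)) + s2*(q*(1-p)) + 2*ua*((1-p)*(1-q)) := by
      have h1 : 0 < s2*(q*(1-p)) := mul_pos hs2 (mul_pos hq0' (by linarith))
      have h2 : (0:ℝ) ≤ s2*(p*(1-q)) := mul_nonneg hs2.le (mul_nonneg hp (by linarith))
      have h3 : (0:ℝ) ≤ 2*ua*((1-p)*(1-q)) :=
        mul_nonneg (by linarith) (mul_nonneg (by linarith) (by linarith))
      linarith
    have hd2 : 0 < (s2-ua)^2 := by
      have hne' : s2 - ua ≠ 0 := sub_ne_zero.2 (Ne.symm hne)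
      exact lt_of_le_of_ne (sq_nonneg _) (Ne.symm (pow_ne_zero 2 hne'))
    have hfin : 0 < ua*(q-p)*(s2-ua)^2*(s2*(p*(1-q)) + s2*(q*(1-p)) + 2*ua*((1-p)*(1-q))) :=
      mul_pos (mul_pos (mul_pos hua0 (by linarith)) hd2) hg
    have hf : (2*ua*(ua + p*(s2-ua)) - ua*s2)*(ua + q*(s2-ua))^2 <
        (2*ua*(ua + q*(s2-ua)) - ua*s2)*(ua + p*(s2-ua))^2 := by
      have hid : (2*ua*(ua + q*(s2-ua)) - ua*s2)*(ua + p*(s2-ua))^2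
          - (2*ua*(ua + p*(s2-ua)) - ua*s2)*(ua + q*(s2-ua))^2
          = ua*(q-p)*(s2-ua)^2*(s2*(p*(1-q)) + s2*(q*(1-p)) + 2*ua*((1-p)*(1-q))) := by
        ring
      linarith
    have hprod : E2 p * (2*ua - E2 p) < E2 q * (2*ua - E2 q) := by
      have e1 : E2 p * (2*ua - E2 p)
          = ua*s2*(2*ua*(ua + p*(s2-ua)) - ua*s2) / (ua + p*(s2-ua))^2 := by
        rw [hA]; field_simp [hDp.ne']
      have e2 : E2 q * (2*ua - E2 q)
          = ua*s2*(2*ua*(ua + q*(s2-ua)) - ua*s2) / (ua + q*(s2-ua))^2 := by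
        rw [hB]; field_simp [hDq.ne']
      rw [e1, e2, div_lt_div_iff₀ (pow_pos hDp 2) (pow_pos hDq 2)]
      have h2 := mul_lt_mul_of_pos_left hf (mul_pos hua0 hs2)
      calc ua*s2*(2*ua*(ua + p*(s2-ua)) - ua*s2) * (ua + q*(s2-ua))^2
          = ua*s2*((2*ua*(ua + p*(s2-ua)) - ua*s2)*(ua + q*(s2-ua))^2) := by ring
        _ < ua*s2*((2*ua*(ua + q*(s2-ua)) - ua*s2)*(ua + p*(s2-ua))^2) := h2
        _ = ua*s2*(2*ua*(ua + q*(s2-ua)) - ua*s2) * (ua + p*(s2-ua))^2 := by ring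
    have hrpos : 0 < E2 p / E2 q * ((2*ua - E2 p)/(2*ua - E2 q)) :=
      mul_pos (div_pos hApos hBpos) (div_pos hA2 hB2)
    have hrlt : E2 p / E2 q * ((2*ua - E2 p)/(2*ua - E2 q)) < 1 := by
      rw [div_mul_div_comm]
      exact (div_lt_one (mul_pos hBpos hB2)).2 hprod
    have hL : (0:ℝ) ≤ 1 - lam*(2-lam) := by nlinarith [sq_nonneg (1-lam)]
    nlinarith [hrpos, hrlt, mul_nonneg hL hrpos.le]
  · intro p hp lam hlam
    have hApos := hE2pos p hp.1 hp.2
    have hA2 : 0 < 2*ua - E2 p := by have := hE2lt p hp.1 hp.2; linarith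
    rw [div_self hApos.ne', div_self hA2.ne', mul_one, mul_one]
    have h1 : (1-lam) ≠ 0 := sub_ne_zero.2 (Ne.symm hlam)
    nlinarith [lt_of_le_of_ne (sq_nonneg (1-lam)) (Ne.symm (pow_ne_zero 2 h1))]
end
end

section
/- For every q ∈ [0,1], the smallest and middle ordered eigenvalues of M_α(q) satisfy E₁(q) + 2 E₂(q) − 3 u_α ≥ 0. (Inequality (ccomb) in the proof of Proposition 7.1.) -/
open Matrix Set

noncomputable section

/-- Trace is preserved under orthogonal conjugation, and so is the trace of the square. -/
lemma conj_traces (Q M D : Matrix (Fin 3) (Fin 3) ℝ) (h1 : Qᵀ * Q = 1)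
    (h2 : Qᵀ * M * Q = D) :
    Matrix.trace M = Matrix.trace D ∧ Matrix.trace (M * M) = Matrix.trace (D * D) := by
  have h1' : Q * Qᵀ = 1 := mul_eq_one_comm.mp h1
  constructor
  · rw [← h2, Matrix.trace_mul_cycle, h1', Matrix.one_mul]
  · have hDD : D * D = Qᵀ * (M * M) * Q := by
      rw [← h2]; simp only [Matrix.mul_assoc]
      rw [← Matrix.mul_assoc Q Qᵀ, h1', Matrix.one_mul]
    rw [hDD, Matrix.trace_mul_cycle, h1', Matrix.one_mul]

lemma trA (s1 s2 s3 x y : ℝ) (nn : Fin 3 → ℝ) :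
    Matrix.trace (x • Matrix.diagonal ![s1,s2,s3] + y • outer nn) =
      x*(s1+s2+s3) + y*(nn 0^2 + nn 1^2 + nn 2^2) := by
  simp [Matrix.trace_fin_three, Matrix.add_apply, Matrix.smul_apply, Matrix.diagonal,
    outer, Matrix.vecMulVec_apply, Matrix.of_apply, dotProduct, Fin.sum_univ_three]
  ring

lemma trA2 (s1 s2 s3 x y : ℝ) (nn : Fin 3 → ℝ) :
    Matrix.trace ((x • Matrix.diagonal ![s1,s2,s3] + y • outer nn) *
        (x • Matrix.diagonal ![s1,s2,s3] + y • outer nn)) =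
      x^2*(s1^2+s2^2+s3^2) + 2*x*y*(s1*nn 0^2 + s2*nn 1^2 + s3*nn 2^2)
        + y^2*(nn 0^2 + nn 1^2 + nn 2^2)^2 := by
  simp [Matrix.trace_fin_three, Matrix.mul_apply, Fin.sum_univ_three, Matrix.add_apply,
    Matrix.smul_apply, Matrix.diagonal, outer, Matrix.vecMulVec_apply, Matrix.of_apply]
  ring

lemma trD (a b c : ℝ) : Matrix.trace (Matrix.diagonal ![a,b,c]) = a + b + c := by
  simp [Matrix.trace_fin_three, Matrix.diagonal]

lemma trD2 (a b c : ℝ) :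
    Matrix.trace (Matrix.diagonal ![a,b,c] * Matrix.diagonal ![a,b,c]) = a^2+b^2+c^2 := by
  simp [Matrix.trace_fin_three, Matrix.mul_apply, Fin.sum_univ_three, Matrix.diagonal,
    Matrix.of_apply]
  ring

set_option maxHeartbeats 1000000 in
theorem statement13 (s1 s2 s3 ua : ℝ)
    (hs1 : 0 < s1) (hs12 : s1 < s2) (hs23 : s2 < s3) (hsum : s1 + s2 + s3 = 1)
    (hua : bpoly s1 s2 s3 ua = 0) (huamin : ∀ x : ℝ, bpoly s1 s2 s3 x = 0 → ua ≤ x)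
    (hua1 : s1 ≤ ua) (hua2 : ua < 1 / 3)
    (S : Matrix (Fin 3) (Fin 3) ℝ) (hS : S = Matrix.diagonal ![s1, s2, s3])
    (n : Fin 3 → ℝ) (hn : unitVec n) (hn1 : n 1 = 0)
    (R : Matrix (Fin 3) (Fin 3) ℝ) (hR : IsSO3 R)
    (heq : Rᵀ * Matrix.diagonal ![ua, ua, 1 - 2 * ua] * R =
      (ua / s2) • S + (1 - ua / s2) • outer n)
    (E1 E2 E3 : ℝ → ℝ)
    (hord : ∀ t ∈ Set.Icc (0 : ℝ) 1, E1 t ≤ E2 t ∧ E2 t ≤ E3 t)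
    (heig : ∀ t ∈ Set.Icc (0 : ℝ) 1, ∃ Q : Matrix (Fin 3) (Fin 3) ℝ, IsSO3 Q ∧
      Qᵀ * Mcurve S n (ua / s2) t * Q = Matrix.diagonal ![E1 t, E2 t, E3 t])
    (hE2 : ∀ t ∈ Set.Icc (0 : ℝ) 1, E2 t = s2 * etaFun (ua / s2) t) :
    ∀ q ∈ Set.Icc (0 : ℝ) 1, E1 q + 2 * E2 q - 3 * ua ≥ 0 := by
  have s2pos : (0:ℝ) < s2 := hs1.trans hs12
  have s3pos : (0:ℝ) < s3 := s2pos.trans hs23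
  have huapos : 0 < ua := hs1.trans_le hua1
  have hn' : n 0 ^ 2 + n 1 ^ 2 + n 2 ^ 2 = 1 := hn
  -- ua < s2 via IVT
  have hus2 : ua < s2 := by
    have hcont : ContinuousOn (fun x => bpoly s1 s2 s3 x) (Set.Icc 0 s2) := by
      unfold bpoly; fun_prop
    have hfs2 : bpoly s1 s2 s3 s2 < 0 := by
      have h : bpoly s1 s2 s3 s2 = s2*((s2-s1)*(s2-s3)) := by
        unfold bpoly; linear_combination s2^2*hsum
      rw [h]
      exact mul_neg_of_pos_of_neg s2pos
        (mul_neg_of_pos_of_neg (sub_pos.2 hs12) (by linarith))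
    have hf0 : 0 ≤ bpoly s1 s2 s3 0 := by unfold bpoly; nlinarith [sq_nonneg s2]
    obtain ⟨x, hxmem, hxval⟩ :=
      intermediate_value_Icc' s2pos.le hcont ⟨hfs2.le, hf0⟩
    have h1 : ua ≤ x := huamin x hxval
    have h2 : x < s2 := lt_of_le_of_ne hxmem.2 (by rintro rfl; exact hfs2.ne hxval)
    linarith
  have hb : 6*s2*ua^2 + (s1*s3 - 3*s2 - 4*s2^2)*ua + 2*s2^2 = 0 := hua
  -- the other root, giving 3 ua^2 ≤ s2
  have h3u : 3*ua^2 ≤ s2 := by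
    have hroot : bpoly s1 s2 s3 (s2/(3*ua)) = 0 := by
      have h : bpoly s1 s2 s3 (s2/(3*ua)) = s2/(3*ua^2) * bpoly s1 s2 s3 ua := by
        unfold bpoly; field_simp; ring
      rw [h, hua, mul_zero]
    have hle := huamin _ hroot
    rw [le_div_iff₀ (by positivity)] at hle
    have h : ua * (3*ua) = 3*ua^2 := by ring
    linarith
  -- lower bound 2 s2 < 3 ua
  have hu_lb : 2*s2 ≤ 3*ua := by
    by_contra h
    push_neg at h
    have h1 : 0 < s2*((3*ua-2*s2)*(2*ua-1)) :=
      mul_pos s2pos (mul_pos_of_neg_of_neg (by linarith) (by linarith))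
    have h2 : 0 < s1*s3*ua := by positivity
    have hid : s2*((3*ua-2*s2)*(2*ua-1)) + s1*s3*ua = 0 := by linear_combination hb
    linarith
  -- introduce a with ua = s2 * a
  obtain ⟨a, ha_def⟩ : ∃ x : ℝ, x = ua / s2 := ⟨_, rfl⟩
  have hsub : ua = s2 * a := by rw [ha_def]; field_simp
  subst hsub
  have ha0 : 0 < a := by
    by_contra h
    push_neg at h
    have : s2 * a ≤ 0 := mul_nonpos_iff.mpr (Or.inl ⟨s2pos.le, h⟩)
    linarith
  have ha1 : a < 1 := by
    by_contra h
    push_neg at h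
    have : s2 * 1 ≤ s2 * a := mul_le_mul_of_nonneg_left h s2pos.le
    rw [mul_one] at this
    linarith
  have hdiv : s2 * a / s2 = a := by field_simp
  rw [hdiv] at heig hE2 heq
  rw [hS] at heq
  intro q hq
  obtain ⟨hq0, hq1⟩ := hq
  -- eta value
  obtain ⟨e, he_def⟩ : ∃ x : ℝ, x = etaFun a q := ⟨_, rfl⟩
  have hden : 0 < a + q * (1 - a) := by nlinarith [mul_nonneg hq0 (by linarith : (0:ℝ) ≤ 1 - a)]
  have he_eq : e = a / (a + q * (1 - a)) := he_def
  have he_low : a ≤ e := by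
    rw [he_eq, le_div_iff₀ hden]
    nlinarith [mul_nonneg (mul_nonneg ha0.le (by linarith : (0:ℝ) ≤ 1 - a))
      (by linarith : (0:ℝ) ≤ 1 - q)]
  have he_hi : e ≤ 1 := by
    rw [he_eq, div_le_one hden]
    nlinarith [mul_nonneg hq0 (by linarith : (0:ℝ) ≤ 1 - a)]
  have hE2e : E2 q = s2 * e := by rw [hE2 q ⟨hq0, hq1⟩, he_def]
  -- traces from the eigendecomposition at q
  obtain ⟨Q, hQ, hQeq⟩ := heig q ⟨hq0, hq1⟩
  have hMeq : Mcurve S n a q = e • Matrix.diagonal ![s1,s2,s3] + (1 - e) • outer n := by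
    rw [Mcurve, hS, ← he_def]
  rw [hMeq] at hQeq
  have hc := conj_traces Q _ _ hQ.1 hQeq
  have F1 := hc.1
  have F2 := hc.2
  rw [trA, trD] at F1
  rw [trA2, trD2] at F2
  -- traces from heq
  have hcR := conj_traces R _ _ hR.1 heq
  have F3raw := hcR.2
  rw [trD2, trA2] at F3raw
  -- cleaned versions
  have hsumE : E1 q + E2 q + E3 q = 1 := by
    linear_combination -F1 + e*hsum + (1-e)*hn'
  have F2' : e^2*(s1^2+s2^2+s3^2) + 2*e*(1-e)*(s1*n 0^2 + s3*n 2^2) + (1-e)^2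
      = E1 q^2 + E2 q^2 + E3 q^2 := by
    linear_combination F2 - (1-e)^2*(n 0^2+n 1^2+n 2^2+1)*hn' - 2*e*(1-e)*s2*(n 1)*hn1
  have hF3 : (s2*a)^2 + (s2*a)^2 + (1 - 2*(s2*a))^2
      = a^2*(s1^2+s2^2+s3^2) + 2*a*(1-a)*(s1*n 0^2 + s3*n 2^2) + (1-a)^2 := by
    linear_combination F3raw + 2*a*(1-a)*s2*(n 1)*hn1 + (1-a)^2*(n 0^2+n 1^2+n 2^2+1)*hn'
  -- scalar endgame
  have hPa : (1 - s2*a)^2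
      - (a^2*(s1^2+s2^2+s3^2) + 2*a*(1-a)*(s1*n 0^2 + s3*n 2^2) + (1-a)^2)
      + (s2*a)^2 - 2*(3*(s2*a) - 2*(s2*a))*(1 - s2*a) + 2*(3*(s2*a) - 2*(s2*a))^2 = 0 := by
    linear_combination hF3
  have hA2key : a*(1-a)*(2*(s1*n 0^2 + s3*n 2^2) - (s1^2+s2^2+s3^2) + 6*s2^2 - 1)
      = 2*a*((s2-s1)*(s2-s3)) := by
    linear_combination -hF3 + a*(4*s2-1-s1-s2-s3)*hsum
  have hA2 : 2*(s1*n 0^2 + s3*n 2^2) - (s1^2+s2^2+s3^2) + 6*s2^2 - 1 ≤ 0 := by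
    by_contra h
    push_neg at h
    have h1 : 0 < a*(1-a)*(2*(s1*n 0^2 + s3*n 2^2) - (s1^2+s2^2+s3^2) + 6*s2^2 - 1) :=
      mul_pos (mul_pos ha0 (by linarith)) h
    have h2 : 2*a*((s2-s1)*(s2-s3)) < 0 :=
      mul_neg_of_pos_of_neg (by linarith) (mul_neg_of_pos_of_neg (sub_pos.2 hs12) (by linarith))
    linarith [hA2key]
  have hP1fact : s2 * ((1 - s2)^2 - (s1^2+s2^2+s3^2) + s2^2
      - 2*(3*(s2*a) - 2*s2)*(1 - s2) + 2*(3*(s2*a) - 2*s2)^2)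
      = (3*(s2*a) - 2*s2)*((s2-s1)*(s3-s2)) := by
    linear_combination 3*hb + s2*(3*s2 - s1 - s3 - 1 - 3*(s2*a))*hsum
  have hP1 : (1 - s2)^2 - (s1^2+s2^2+s3^2) + s2^2
      - 2*(3*(s2*a) - 2*s2)*(1 - s2) + 2*(3*(s2*a) - 2*s2)^2 ≥ 0 := by
    have hr : 0 ≤ (3*(s2*a) - 2*s2)*((s2-s1)*(s3-s2)) :=
      mul_nonneg (by linarith) (mul_pos (sub_pos.2 hs12) (sub_pos.2 hs23)).le
    by_contra h
    push_neg at h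
    have : s2 * ((1 - s2)^2 - (s1^2+s2^2+s3^2) + s2^2
        - 2*(3*(s2*a) - 2*s2)*(1 - s2) + 2*(3*(s2*a) - 2*s2)^2) < 0 :=
      mul_neg_of_pos_of_neg s2pos h
    linarith [hP1fact]
  -- interpolation identity, with Pa = 0 folded in
  have hinterp2 : (1-a) * ((1 - s2*e)^2
      - (e^2*(s1^2+s2^2+s3^2) + 2*e*(1-e)*(s1*n 0^2 + s3*n 2^2) + (1-e)^2)
      + (s2*e)^2 - 2*(3*(s2*a) - 2*(s2*e))*(1 - s2*e) + 2*(3*(s2*a) - 2*(s2*e))^2)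
      = (e-a) * ((1 - s2)^2 - (s1^2+s2^2+s3^2) + s2^2
          - 2*(3*(s2*a) - 2*s2)*(1 - s2) + 2*(3*(s2*a) - 2*s2)^2)
        + (2*(s1*n 0^2 + s3*n 2^2) - (s1^2+s2^2+s3^2) + 6*s2^2 - 1)
          * ((e-a)*(e-1)*(1-a)) := by
    linear_combination (1-e)*hPa
  have hPe : 0 ≤ (1 - s2*e)^2
      - (e^2*(s1^2+s2^2+s3^2) + 2*e*(1-e)*(s1*n 0^2 + s3*n 2^2) + (1-e)^2)
      + (s2*e)^2 - 2*(3*(s2*a) - 2*(s2*e))*(1 - s2*e) + 2*(3*(s2*a) - 2*(s2*e))^2 := by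
    have h1 : 0 ≤ (e-a) * ((1 - s2)^2 - (s1^2+s2^2+s3^2) + s2^2
        - 2*(3*(s2*a) - 2*s2)*(1 - s2) + 2*(3*(s2*a) - 2*s2)^2) :=
      mul_nonneg (by linarith) hP1
    have hpr : (e-a)*(e-1)*(1-a) ≤ 0 := by
      have hre : (e-a)*(e-1)*(1-a) = -((e-a)*((1-e)*(1-a))) := by ring
      rw [hre]
      exact neg_nonpos.mpr (mul_nonneg (by linarith)
        (mul_nonneg (by linarith) (by linarith)))
    have h2 : 0 ≤ (2*(s1*n 0^2 + s3*n 2^2) - (s1^2+s2^2+s3^2) + 6*s2^2 - 1)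
        * ((e-a)*(e-1)*(1-a)) := by
      have h2' := mul_nonneg (neg_nonneg.2 hA2) (neg_nonneg.2 hpr)
      rw [neg_mul_neg] at h2'
      exact h2'
    have h3 : 0 ≤ (1-a) * ((1 - s2*e)^2
        - (e^2*(s1^2+s2^2+s3^2) + 2*e*(1-e)*(s1*n 0^2 + s3*n 2^2) + (1-e)^2)
        + (s2*e)^2 - 2*(3*(s2*a) - 2*(s2*e))*(1 - s2*e) + 2*(3*(s2*a) - 2*(s2*e))^2) := by
      rw [hinterp2]; linarith
    by_contra h
    push_neg at h
    have : (1-a) * ((1 - s2*e)^2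
        - (e^2*(s1^2+s2^2+s3^2) + 2*e*(1-e)*(s1*n 0^2 + s3*n 2^2) + (1-e)^2)
        + (s2*e)^2 - 2*(3*(s2*a) - 2*(s2*e))*(1 - s2*e) + 2*(3*(s2*a) - 2*(s2*e))^2) < 0 :=
      mul_neg_of_pos_of_neg (by linarith) h
    linarith
  -- convert to the eigenvalue product
  have hE13 : E1 q + E3 q = 1 - s2*e := by linear_combination hsumE - hE2e
  have hsq : E1 q^2 + E3 q^2
      = (e^2*(s1^2+s2^2+s3^2) + 2*e*(1-e)*(s1*n 0^2 + s3*n 2^2) + (1-e)^2) - (s2*e)^2 := by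
    linear_combination -F2' - (E2 q + s2*e)*hE2e
  have hprodeq : 2*((E1 q - (3*(s2*a) - 2*(s2*e))) * (E3 q - (3*(s2*a) - 2*(s2*e))))
      = (1 - s2*e)^2
      - (e^2*(s1^2+s2^2+s3^2) + 2*e*(1-e)*(s1*n 0^2 + s3*n 2^2) + (1-e)^2)
      + (s2*e)^2 - 2*(3*(s2*a) - 2*(s2*e))*(1 - s2*e) + 2*(3*(s2*a) - 2*(s2*e))^2 := by
    linear_combination (E1 q + E3 q + 1 - s2*e - 2*(3*(s2*a) - 2*(s2*e)))*hE13 - hsq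
  have hxz : 0 ≤ (E1 q - (3*(s2*a) - 2*(s2*e))) * (E3 q - (3*(s2*a) - 2*(s2*e))) := by
    linarith [hPe, hprodeq]
  have hsumxz : 0 ≤ (E1 q - (3*(s2*a) - 2*(s2*e))) + (E3 q - (3*(s2*a) - 2*(s2*e))) := by
    have hse : s2*a ≤ s2*e := mul_le_mul_of_nonneg_left he_low s2pos.le
    linarith [hE13, hua2]
  have hx : 0 ≤ E1 q - (3*(s2*a) - 2*(s2*e)) := by
    by_contra h
    push_neg at h
    have h3 : 0 < E3 q - (3*(s2*a) - 2*(s2*e)) := by linarith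
    have : (E1 q - (3*(s2*a) - 2*(s2*e))) * (E3 q - (3*(s2*a) - 2*(s2*e))) < 0 :=
      mul_neg_of_neg_of_pos h h3
    linarith
  linarith [hx, hE2e]
end
end

section
/- The functions t ↦ i₂(M_α(t)), t ↦ i₃(M_α(t)), t ↦ i₂(M_β(t)), t ↦ i₃(M_β(t)) are differentiable at t = 0, the derivatives of the i₂-components at 0 are nonzero, and the slopes of the curves γ_α and γ_β at the common point (i₂(S), i₃(S)) satisfy (d/dt i₃(M_α))(0) / (d/dt i₂(M_α))(0) = 3 s₂ (1 − 2u_α)/(2 − 3u_α), (d/dt i₃(M_β))(0) / (d/dt i₂(M_β))(0) = 3 s₂ (1 − 2u_β)/(2 − 3u_β), and 3 s₂ (1 − 2u_α)/(2 − 3u_α) > 3 s₂ (1 − 2u_β)/(2 − 3u_β). (Lemma 4.4, tangent comparison at S.) -/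
open Matrix Set

noncomputable section

lemma etaFun_hasDerivAt (a : ℝ) (ha : a ≠ 0) : HasDerivAt (etaFun a) (-(1 - a)/a) 0 := by
  have hden : HasDerivAt (fun t : ℝ => a + t * (1 - a)) (1 - a) 0 := by
    simpa using ((hasDerivAt_id (0:ℝ)).mul_const (1 - a)).const_add a
  have h := (hasDerivAt_const (0:ℝ) a).div hden (by simpa using ha)
  have he : etaFun a = fun t : ℝ => a / (a + t * (1 - a)) := rfl
  rw [he]
  refine h.congr_deriv ?_
  rw [div_eq_div_iff (pow_ne_zero 2 (by simpa using ha)) ha]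
  ring

lemma quad_comp_hasDerivAt (a A B : ℝ) (ha : a ≠ 0) :
    HasDerivAt (fun t => A*(etaFun a t)^2 + B*(etaFun a t)) ((2*A + B) * (-(1 - a)/a)) 0 := by
  have hq : HasDerivAt (fun x : ℝ => A*x^2 + B*x) (2*A + B) 1 := by
    have h := ((hasDerivAt_pow 2 (1:ℝ)).const_mul A).add ((hasDerivAt_id (1:ℝ)).const_mul B)
    refine h.congr_deriv ?_
    push_cast
    ring
  have h0 : etaFun a 0 = 1 := by simp [etaFun, ha]
  rw [← h0] at hq
  exact hq.comp 0 (etaFun_hasDerivAt a ha)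

lemma cube_comp_hasDerivAt (a A B : ℝ) (ha : a ≠ 0) :
    HasDerivAt (fun t => A*(etaFun a t)^3 + B*(etaFun a t)^2) ((3*A + 2*B) * (-(1 - a)/a)) 0 := by
  have hq : HasDerivAt (fun x : ℝ => A*x^3 + B*x^2) (3*A + 2*B) 1 := by
    have h := ((hasDerivAt_pow 3 (1:ℝ)).const_mul A).add ((hasDerivAt_pow 2 (1:ℝ)).const_mul B)
    refine h.congr_deriv ?_
    push_cast
    ring
  have h0 : etaFun a 0 = 1 := by simp [etaFun, ha]
  rw [← h0] at hq
  exact hq.comp 0 (etaFun_hasDerivAt a ha)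

lemma aux_curve (s1 s2 s3 u : ℝ)
    (hs2 : 0 < s2) (hsum : s1 + s2 + s3 = 1)
    (hu : bpoly s1 s2 s3 u = 0) (hu0 : 0 < u) (hu23 : u < 2/3) (hus2 : u ≠ s2)
    (S : Matrix (Fin 3) (Fin 3) ℝ) (hS : S = Matrix.diagonal ![s1, s2, s3])
    (n : Fin 3 → ℝ) (hn : unitVec n) (hn1 : n 1 = 0)
    (hdet : ((u / s2) • S + (1 - u / s2) • outer n).det = u ^ 2 * (1 - 2 * u)) :
    DifferentiableAt ℝ (fun t => i2 (Mcurve S n (u / s2) t)) 0 ∧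
    DifferentiableAt ℝ (fun t => i3 (Mcurve S n (u / s2) t)) 0 ∧
    deriv (fun t => i2 (Mcurve S n (u / s2) t)) 0 ≠ 0 ∧
    deriv (fun t => i3 (Mcurve S n (u / s2) t)) 0 /
        deriv (fun t => i2 (Mcurve S n (u / s2) t)) 0 =
      3 * s2 * (1 - 2 * u) / (2 - 3 * u) := by
  have hs3 : s3 = 1 - s1 - s2 := by linarith
  subst hs3
  have hs2' : s2 ≠ 0 := ne_of_gt hs2
  have hu0' : u ≠ 0 := ne_of_gt hu0
  have hnn : n 0 ^ 2 + n 2 ^ 2 = 1 := by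
    have h := hn
    rw [unitVec, hn1] at h
    linarith
  have ha0 : u / s2 ≠ 0 := div_ne_zero hu0' hs2'
  have ha1 : u / s2 ≠ 1 := by
    intro h
    apply hus2
    field_simp at h
    exact h
  have hcne : -(1 - u / s2)/(u / s2) ≠ 0 := by
    apply div_ne_zero _ ha0
    intro h
    apply ha1
    linarith
  -- b(u) = 0 unfolded
  simp only [bpoly] at hu
  -- the scalar w-equation from the determinant hypothesis
  have hw2 : (s2 - u) * (s1 * n 2 ^ 2 + (1 - s1 - s2) * n 0 ^ 2) * u ^ 2 =
      (s2^2*(1-2*u) - u*(s1*(1-s1-s2))) * u ^ 2 := by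
    rw [hS] at hdet
    simp [Matrix.det_fin_three, outer, Matrix.vecMulVec_apply, Matrix.diagonal, hn1,
      Matrix.add_apply, Matrix.smul_apply, smul_eq_mul, Matrix.cons_val', Matrix.cons_val_zero,
      Matrix.cons_val_one, Matrix.head_cons, Matrix.of_apply, Matrix.empty_val',
      Matrix.cons_val_fin_one] at hdet
    field_simp at hdet
    linear_combination u * hdet
  have hw : (s2 - u) * (s1 * n 2 ^ 2 + (1 - s1 - s2) * n 0 ^ 2) =
      s2^2*(1-2*u) - u*(s1*(1-s1-s2)) :=
    mul_right_cancel₀ (pow_ne_zero 2 hu0') hw2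
  -- the two curve identities
  have e2 : (fun t => i2 (Mcurve S n (u / s2) t)) =
      (fun t => (s2*s1 + s2*(1-s1-s2) - s2 + s1*(1-s1-s2)
          - (s1*n 2^2 + (1-s1-s2)*n 0^2)) * (etaFun (u / s2) t)^2
        + (s2 + (s1*n 2^2 + (1-s1-s2)*n 0^2)) * (etaFun (u / s2) t)) := by
    funext t
    rw [hS]
    simp [i2, Mcurve, outer, Matrix.trace_fin_three, Matrix.mul_apply, Fin.sum_univ_three,
      Matrix.add_apply, Matrix.smul_apply, smul_eq_mul, Matrix.vecMulVec_apply,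
      Matrix.diagonal, hn1, Matrix.cons_val', Matrix.cons_val_zero,
      Matrix.cons_val_one, Matrix.head_cons, Matrix.of_apply, Matrix.empty_val',
      Matrix.cons_val_fin_one]
    simp only [dotProduct, Fin.sum_univ_three, hn1]
    linear_combination (etaFun (u / s2) t * s2 * (1 - etaFun (u / s2) t)) * hnn
  have e3 : (fun t => i3 (Mcurve S n (u / s2) t)) =
      (fun t => (s2*(s1*(1-s1-s2)) - s2*(s1*n 2^2 + (1-s1-s2)*n 0^2)) * (etaFun (u / s2) t)^3
        + (s2*(s1*n 2^2 + (1-s1-s2)*n 0^2)) * (etaFun (u / s2) t)^2) := by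
    funext t
    rw [hS]
    simp [i3, Mcurve, outer, Matrix.det_fin_three,
      Matrix.add_apply, Matrix.smul_apply, smul_eq_mul, Matrix.vecMulVec_apply,
      Matrix.diagonal, hn1, Matrix.cons_val', Matrix.cons_val_zero,
      Matrix.cons_val_one, Matrix.head_cons, Matrix.of_apply, Matrix.empty_val',
      Matrix.cons_val_fin_one]
    ring
  have h2 : HasDerivAt (fun t => i2 (Mcurve S n (u / s2) t))
      ((2*(s2*s1 + s2*(1-s1-s2) - s2 + s1*(1-s1-s2) - (s1*n 2^2 + (1-s1-s2)*n 0^2))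
        + (s2 + (s1*n 2^2 + (1-s1-s2)*n 0^2))) * (-(1 - u / s2)/(u / s2))) 0 := by
    rw [e2]
    exact quad_comp_hasDerivAt _ _ _ ha0
  have h3 : HasDerivAt (fun t => i3 (Mcurve S n (u / s2) t))
      ((3*(s2*(s1*(1-s1-s2)) - s2*(s1*n 2^2 + (1-s1-s2)*n 0^2))
        + 2*(s2*(s1*n 2^2 + (1-s1-s2)*n 0^2))) * (-(1 - u / s2)/(u / s2))) 0 := by
    rw [e3]
    exact cube_comp_hasDerivAt _ _ _ ha0
  -- abbreviate the two slopes
  set D2 := 2*(s2*s1 + s2*(1-s1-s2) - s2 + s1*(1-s1-s2) - (s1*n 2^2 + (1-s1-s2)*n 0^2))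
        + (s2 + (s1*n 2^2 + (1-s1-s2)*n 0^2)) with hD2def
  set D3 := 3*(s2*(s1*(1-s1-s2)) - s2*(s1*n 2^2 + (1-s1-s2)*n 0^2))
        + 2*(s2*(s1*n 2^2 + (1-s1-s2)*n 0^2)) with hD3def
  have hsu : s2 - u ≠ 0 := sub_ne_zero.mpr (Ne.symm hus2)
  have hD2 : D2 ≠ 0 := by
    intro h
    have key : u*(s2-u)*D2 = 2*s2*(u-s2)^2*(3*u-2) := by
      rw [hD2def]
      linear_combination (-u) * hw + (2*s2 - u) * hu
    rw [h, mul_zero] at key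
    have h1 : (0:ℝ) < (u - s2)^2 := by
      have : u - s2 ≠ 0 := sub_ne_zero.mpr hus2
      positivity
    nlinarith [mul_pos hs2 h1]
  have h23 : (2 - 3*u) ≠ 0 := by intro h; nlinarith
  have key2 : (s2-u) * (D3*(2-3*u)) = (s2-u) * (3*s2*(1-2*u)*D2) := by
    rw [hD2def, hD3def]
    linear_combination (s2*(1-3*u)) * hw + (3*s2^2-s2) * hu
  have hratio : D3 / D2 = 3 * s2 * (1 - 2 * u) / (2 - 3 * u) := by
    rw [div_eq_div_iff hD2 h23]
    exact mul_left_cancel₀ hsu key2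
  refine ⟨h2.differentiableAt, h3.differentiableAt, ?_, ?_⟩
  · rw [h2.deriv]
    exact mul_ne_zero hD2 hcne
  · rw [h2.deriv, h3.deriv, mul_div_mul_right _ _ hcne]
    exact hratio

set_option maxHeartbeats 1000000 in
theorem statement19 (s1 s2 s3 ua ub : ℝ)
    (hs1 : 0 < s1) (hs12 : s1 < s2) (hs23 : s2 < s3) (hsum : s1 + s2 + s3 = 1)
    (hua : bpoly s1 s2 s3 ua = 0) (huamin : ∀ x : ℝ, bpoly s1 s2 s3 x = 0 → ua ≤ x)
    (hub : bpoly s1 s2 s3 ub = 0) (hubmax : ∀ x : ℝ, bpoly s1 s2 s3 x = 0 → x ≤ ub)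
    (hua1 : s1 ≤ ua) (hua2 : ua < 1 / 3) (hub1 : 1 / 3 < ub) (hub2 : ub ≤ s3)
    (S : Matrix (Fin 3) (Fin 3) ℝ) (hS : S = Matrix.diagonal ![s1, s2, s3])
    (n : Fin 3 → ℝ) (hn : unitVec n) (hn1 : n 1 = 0)
    (m : Fin 3 → ℝ) (hm : unitVec m) (hm1 : m 1 = 0)
    (R : Matrix (Fin 3) (Fin 3) ℝ) (hR : IsSO3 R)
    (heqa : Rᵀ * Matrix.diagonal ![ua, ua, 1 - 2 * ua] * R =
      (ua / s2) • S + (1 - ua / s2) • outer n)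
    (Rp : Matrix (Fin 3) (Fin 3) ℝ) (hRp : IsSO3 Rp)
    (heqb : Rpᵀ * Matrix.diagonal ![1 - 2 * ub, ub, ub] * Rp =
      (ub / s2) • S + (1 - ub / s2) • outer m) :
    DifferentiableAt ℝ (fun t => i2 (Mcurve S n (ua / s2) t)) 0 ∧
    DifferentiableAt ℝ (fun t => i3 (Mcurve S n (ua / s2) t)) 0 ∧
    DifferentiableAt ℝ (fun t => i2 (Mcurve S m (ub / s2) t)) 0 ∧
    DifferentiableAt ℝ (fun t => i3 (Mcurve S m (ub / s2) t)) 0 ∧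
    deriv (fun t => i2 (Mcurve S n (ua / s2) t)) 0 ≠ 0 ∧
    deriv (fun t => i2 (Mcurve S m (ub / s2) t)) 0 ≠ 0 ∧
    deriv (fun t => i3 (Mcurve S n (ua / s2) t)) 0 /
        deriv (fun t => i2 (Mcurve S n (ua / s2) t)) 0 =
      3 * s2 * (1 - 2 * ua) / (2 - 3 * ua) ∧
    deriv (fun t => i3 (Mcurve S m (ub / s2) t)) 0 /
        deriv (fun t => i2 (Mcurve S m (ub / s2) t)) 0 =
      3 * s2 * (1 - 2 * ub) / (2 - 3 * ub) ∧
    3 * s2 * (1 - 2 * ua) / (2 - 3 * ua) > 3 * s2 * (1 - 2 * ub) / (2 - 3 * ub) := by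
  have hs2 : (0:ℝ) < s2 := hs1.trans hs12
  have hs2' : s2 ≠ 0 := ne_of_gt hs2
  have hua0 : 0 < ua := lt_of_lt_of_le hs1 hua1
  have hub0 : 0 < ub := by linarith
  have hne : ua ≠ ub := by intro h; rw [h] at hua2; linarith
  -- Vieta
  have hua' := hua
  have hub' := hub
  simp only [bpoly] at hua' hub'
  have h1 : (ua-ub)*(6*s2*(ua+ub) + (s1*s3-3*s2-4*s2^2)) = 0 := by
    linear_combination hua' - hub'
  have hPQ : 6*s2*(ua+ub) + (s1*s3-3*s2-4*s2^2) = 0 :=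
    (mul_eq_zero.mp h1).resolve_left (sub_ne_zero.mpr hne)
  have hprod : 6*s2*(ua*ub) = 2*s2^2 := by
    linear_combination ua * hPQ - hua'
  -- ua ≠ s2 and ub ≠ s2
  have hbs2 : bpoly s1 s2 s3 s2 = s2*((s2-s1)*(s2-s3)) := by
    simp only [bpoly]
    linear_combination (s2^2) * hsum
  have hbs2ne : bpoly s1 s2 s3 s2 ≠ 0 := by
    rw [hbs2]
    have : (s2-s1)*(s2-s3) < 0 := mul_neg_of_pos_of_neg (by linarith) (by linarith)
    nlinarith
  have huas2 : ua ≠ s2 := by intro h; rw [h] at hua; exact hbs2ne hua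
  have hubs2 : ub ≠ s2 := by intro h; rw [h] at hub; exact hbs2ne hub
  -- ub < 2/3
  have hfact : bpoly s1 s2 s3 (s2/2) = 6*s2*((s2/2)-ua)*((s2/2)-ub) := by
    simp only [bpoly]
    linear_combination (s2/2) * hPQ - hprod
  have hbmid : bpoly s1 s2 s3 (s2/2) = s2/2*(s1*s3+s2*s1+s2*s3) := by
    simp only [bpoly]
    linear_combination (-(s2^2)/2) * hsum
  have hs3pos : 0 < s3 := by linarith
  have hmidpos : 0 < bpoly s1 s2 s3 (s2/2) := by
    rw [hbmid]
    have h1 : 0 < s1*s3 := mul_pos hs1 hs3pos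
    have h2 : 0 < s2*s1 := mul_pos hs2 hs1
    have h3 : 0 < s2*s3 := mul_pos hs2 hs3pos
    nlinarith
  have hs2half : s2 < 1/2 := by linarith
  have hmidub : s2/2 - ub < 0 := by linarith
  have huahalf : s2/2 < ua := by
    rw [hfact] at hmidpos
    by_contra hcon
    push_neg at hcon
    have h4 : 0 ≤ s2/2 - ua := by linarith
    have h5 : (s2/2-ua)*((s2/2)-ub) ≤ 0 :=
      mul_nonpos_of_nonneg_of_nonpos h4 (le_of_lt hmidub)
    nlinarith
  have hub23 : ub < 2/3 := by nlinarith
  -- determinant equations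
  have hdeta : ((ua / s2) • S + (1 - ua / s2) • outer n).det = ua ^ 2 * (1 - 2 * ua) := by
    rw [← heqa, Matrix.det_mul, Matrix.det_mul, Matrix.det_transpose, hR.2,
      Matrix.det_diagonal, Fin.prod_univ_three]
    simp only [Matrix.cons_val_zero, Matrix.cons_val_one, Matrix.head_cons,
      Matrix.cons_val_two, Matrix.tail_cons]
    ring
  have hdetb : ((ub / s2) • S + (1 - ub / s2) • outer m).det = ub ^ 2 * (1 - 2 * ub) := by
    rw [← heqb, Matrix.det_mul, Matrix.det_mul, Matrix.det_transpose, hRp.2,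
      Matrix.det_diagonal, Fin.prod_univ_three]
    simp only [Matrix.cons_val_zero, Matrix.cons_val_one, Matrix.head_cons,
      Matrix.cons_val_two, Matrix.tail_cons]
    ring
  obtain ⟨dA2, dA3, dAne, dAr⟩ := aux_curve s1 s2 s3 ua hs2 hsum hua hua0
    (by linarith) huas2 S hS n hn hn1 hdeta
  obtain ⟨dB2, dB3, dBne, dBr⟩ := aux_curve s1 s2 s3 ub hs2 hsum hub hub0
    hub23 hubs2 S hS m hm hm1 hdetb
  refine ⟨dA2, dA3, dB2, dB3, dAne, dBne, dAr, dBr, ?_⟩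
  rw [gt_iff_lt, div_lt_div_iff₀ (by linarith) (by linarith)]
  nlinarith [mul_pos hs2 (sub_pos.mpr (hua2.trans hub1))]
end
end
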